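/- arXiv:2105.11718 — 12 statements merged into one kernel-verified Lean document; each statement's English description precedes it below -/
import Mathlib

section
/- Let M be an m × k matrix with entries in {0,1} with k ≥ 1. If the total number of 1-entries of M is strictly less than 2k − 2, then M is not a minimal linear dependency, i.e., it is not the case that both rank(M) = k − 1 and there exists x ∈ ℝ^k with Mx = 0 and supp(x) = [k]. -/
/-- A {0,1}-matrix with `k ≥ 1` columns and fewer than `2k - 2` ones is not a minimal
linear dependency. -/
theorem stmt1 {m k : ℕ} (hk : 1 ≤ k) (M : Matrix (Fin m) (Fin k) ℝ)
    (h01 : ∀ i j, M i j = 0 ∨ M i j = 1)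
    (hones : Set.ncard {p : Fin m × Fin k | M p.1 p.2 = 1} < 2 * k - 2) :
    ¬ (M.rank = k - 1 ∧ ∃ x : Fin k → ℝ, M.mulVec x = 0 ∧ ∀ j, x j ≠ 0) := by
  classical
  rintro ⟨hrank, x, hMx, hx⟩
  -- the set of nonzero rows
  set S : Finset (Fin m) := Finset.univ.filter (fun i => M i ≠ 0) with hS
  -- Step 1: every nonzero row has at least two ones
  have hrow : ∀ i ∈ S, 2 ≤ (Finset.univ.filter (fun j => M i j = 1)).card := by
    intro i hi
    rw [hS, Finset.mem_filter] at hi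
    by_contra hlt
    push_neg at hlt
    -- the row is nonzero, so the filter is nonempty
    obtain ⟨j, hj⟩ : ∃ j, M i j = 1 := by
      by_contra hall
      push_neg at hall
      exact hi.2 (funext fun j => (h01 i j).resolve_right (hall j))
    have hjmem : j ∈ Finset.univ.filter (fun j => M i j = 1) := by
      simp [hj]
    have hcard1 : (Finset.univ.filter (fun j => M i j = 1)).card = 1 := by
      have h1 : 1 ≤ (Finset.univ.filter (fun j => M i j = 1)).card :=
        Finset.card_pos.mpr ⟨j, hjmem⟩
      omega
    have hsingle : Finset.univ.filter (fun j => M i j = 1) = {j} := by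
      rw [Finset.eq_singleton_iff_unique_mem]
      refine ⟨hjmem, fun y hy => ?_⟩
      by_contra hne
      have : 2 ≤ (Finset.univ.filter (fun j => M i j = 1)).card :=
        Finset.one_lt_card.mpr ⟨y, hy, j, hjmem, hne⟩
      omega
    -- then (M.mulVec x) i = x j ≠ 0, contradiction
    have h0 : M.mulVec x i = 0 := by rw [hMx]; rfl
    rw [Matrix.mulVec, dotProduct] at h0
    have hsum : ∑ j', M i j' * x j' = x j := by
      rw [Finset.sum_eq_single j]
      · rw [hj, one_mul]
      · intro b _ hb
        have hb1 : M i b ≠ 1 := by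
          intro h1
          have : b ∈ Finset.univ.filter (fun j => M i j = 1) := by simp [h1]
          rw [hsingle, Finset.mem_singleton] at this
          exact hb this
        rw [(h01 i b).resolve_right hb1, zero_mul]
      · intro h; exact absurd (Finset.mem_univ j) h
    exact hx j (hsum ▸ h0)
  -- Step 2: rank ≤ number of nonzero rows
  have hrankle : M.rank ≤ S.card := by
    rw [Matrix.rank_eq_finrank_span_row]
    have hle : Submodule.span ℝ (Set.range M) ≤
        Submodule.span ℝ ((S.image (fun i => M i) : Finset (Fin k → ℝ)) : Set (Fin k → ℝ)) := by
      rw [Submodule.span_le]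
      rintro _ ⟨i, rfl⟩
      by_cases hMi : M i = 0
      · rw [hMi]; exact Submodule.zero_mem _
      · apply Submodule.subset_span
        simp only [Finset.coe_image, Set.mem_image, Finset.mem_coe]
        exact ⟨i, by simp [hS, hMi], rfl⟩
    calc Module.finrank ℝ (Submodule.span ℝ (Set.range M))
        ≤ Module.finrank ℝ (Submodule.span ℝ
            ((S.image (fun i => M i) : Finset (Fin k → ℝ)) : Set (Fin k → ℝ))) :=
          Submodule.finrank_mono hle
      _ ≤ (S.image (fun i => M i)).card := finrank_span_finset_le_card _
      _ ≤ S.card := Finset.card_image_le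
  -- Step 3: count the ones
  have hcount : 2 * S.card ≤ Set.ncard {p : Fin m × Fin k | M p.1 p.2 = 1} := by
    have hfin : {p : Fin m × Fin k | M p.1 p.2 = 1} =
        ↑(Finset.univ.filter (fun p : Fin m × Fin k => M p.1 p.2 = 1)) := by
      ext p; simp
    rw [hfin, Set.ncard_coe_finset]
    have hsum : (Finset.univ.filter (fun p : Fin m × Fin k => M p.1 p.2 = 1)).card =
        ∑ i : Fin m, (Finset.univ.filter (fun j => M i j = 1)).card := by
      rw [Finset.card_eq_sum_card_fiberwise (f := Prod.fst) (t := Finset.univ)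
        (fun p _ => Finset.mem_univ _)]
      apply Finset.sum_congr rfl
      intro i _
      apply Finset.card_nbij' (fun p => p.2) (fun j => (i, j))
      · intro p hp
        simp only [Finset.mem_coe, Finset.mem_filter] at hp ⊢
        exact ⟨Finset.mem_univ _, hp.2 ▸ hp.1.2⟩
      · intro j hj
        simp only [Finset.mem_coe, Finset.mem_filter] at hj ⊢
        exact ⟨⟨Finset.mem_univ _, hj.2⟩, trivial⟩
      · intro p hp
        simp only [Finset.mem_coe, Finset.mem_filter] at hp
        exact Prod.ext hp.2.symm rfl
      · intro j _; rfl
    rw [hsum]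
    calc 2 * S.card = ∑ i ∈ S, 2 := by rw [Finset.sum_const]; ring
      _ ≤ ∑ i ∈ S, (Finset.univ.filter (fun j => M i j = 1)).card :=
          Finset.sum_le_sum hrow
      _ ≤ ∑ i : Fin m, (Finset.univ.filter (fun j => M i j = 1)).card :=
          Finset.sum_le_sum_of_subset (Finset.subset_univ S)
  omega
end

section
/- Let M be an m × k matrix that is a minimal linear dependency, and let G be the hypergraph on vertex set [k] whose hyperedges are the supports of the nonzero rows of M (rows index hyperedges, columns index vertices). Then G is connected, i.e., all k vertices lie in one connected component. -/
/-- The hypergraph whose hyperedges are the supports of the rows of a minimal linear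
dependency is connected. -/
theorem stmt3 {m k : ℕ} (M : Matrix (Fin m) (Fin k) ℝ)
    (hrank : M.rank = k - 1)
    (hdep : ∃ x : Fin k → ℝ, M.mulVec x = 0 ∧ ∀ j, x j ≠ 0)
    (a b : Fin k) :
    Relation.ReflTransGen (fun u v : Fin k => ∃ r, M r u ≠ 0 ∧ M r v ≠ 0) a b := by
  classical
  by_contra hab
  obtain ⟨x, hx0, hxne⟩ := hdep
  set S : Set (Fin k) :=
    {v | Relation.ReflTransGen (fun u v : Fin k => ∃ r, M r u ≠ 0 ∧ M r v ≠ 0) a v} with hS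
  have haS : a ∈ S := Relation.ReflTransGen.refl
  have hbS : b ∉ S := hab
  have hSclosed : ∀ u v : Fin k, u ∈ S → (∃ r, M r u ≠ 0 ∧ M r v ≠ 0) → v ∈ S :=
    fun u v hu h => Relation.ReflTransGen.tail hu h
  set y : Fin k → ℝ := fun j => if j ∈ S then x j else 0 with hy
  set z : Fin k → ℝ := fun j => if j ∈ S then 0 else x j with hz
  have hyz : x = y + z := by
    funext j
    by_cases h : j ∈ S <;> simp [hy, hz, h]
  have hMy : M.mulVec y = 0 := by
    funext r
    show ∑ j, M r j * y j = 0
    by_cases hr : ∃ u ∈ S, M r u ≠ 0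
    · obtain ⟨u, huS, hru⟩ := hr
      have heq : ∀ j, M r j * y j = M r j * x j := by
        intro j
        by_cases hj : j ∈ S
        · simp [hy, hj]
        · have hMj : M r j = 0 := by
            by_contra hMj
            exact hj (hSclosed u j huS ⟨r, hru, hMj⟩)
          simp [hMj]
      rw [Finset.sum_congr rfl fun j _ => heq j]
      have := congrFun hx0 r
      simpa [Matrix.mulVec, dotProduct] using this
    · push_neg at hr
      apply Finset.sum_eq_zero
      intro j _
      by_cases hj : j ∈ S
      · simp [hy, hj, hr j hj]
      · simp [hy, hj]
  have hMz : M.mulVec z = 0 := by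
    have : M.mulVec x = M.mulVec y + M.mulVec z := by
      rw [hyz, Matrix.mulVec_add]
    rw [hx0, hMy] at this
    simpa using this.symm
  have hli : LinearIndependent ℝ ![y, z] := by
    rw [LinearIndependent.pair_iff]
    intro s t hst
    have ha' := congrFun hst a
    have hb' := congrFun hst b
    simp [hy, hz, haS, hbS] at ha' hb'
    constructor
    · rcases ha' with h | h
      · exact h
      · exact absurd h (hxne a)
    · rcases hb' with h | h
      · exact h
      · exact absurd h (hxne b)
  have hspan : Submodule.span ℝ (Set.range ![y, z]) ≤ LinearMap.ker M.mulVecLin := by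
    rw [Submodule.span_le]
    rintro v ⟨i, rfl⟩
    fin_cases i
    · simpa [Matrix.mulVecLin] using hMy
    · simpa [Matrix.mulVecLin] using hMz
  have h2 : 2 ≤ Module.finrank ℝ (LinearMap.ker M.mulVecLin) := by
    have := finrank_span_eq_card hli
    calc 2 = Module.finrank ℝ (Submodule.span ℝ (Set.range ![y, z])) := by
            rw [this]; simp
      _ ≤ Module.finrank ℝ (LinearMap.ker M.mulVecLin) := Submodule.finrank_mono hspan
  have hrn : M.rank + Module.finrank ℝ (LinearMap.ker M.mulVecLin) = k := by
    have := LinearMap.finrank_range_add_finrank_ker M.mulVecLin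
    simpa [Matrix.rank] using this
  have hk : 0 < k := a.pos
  rw [hrank] at hrn
  omega
end

section
/- Let k ≥ 1 and let M be a {0,1}-matrix with k columns that is a minimal linear dependency with exactly 2k − 2 entries equal to 1. Then the nonzero rows of M form the edge-vertex incidence matrix of a tree on k vertices (each nonzero row has exactly two 1s and these rows encode the k − 1 edges of a tree). Conversely, every {0,1}-matrix whose nonzero rows form the edge-vertex incidence matrix of a tree on k vertices is a minimal linear dependency with 2k − 2 ones. -/
open Finset

/-- Row `r` of `M` has ones exactly at columns `i` and `j` (the incidence row of edge `{i,j}`). -/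
def IsEdgeRow {m k : ℕ} (M : Matrix (Fin m) (Fin k) ℝ) (r : Fin m) (i j : Fin k) : Prop :=
  ∀ l, M r l = if l = i ∨ l = j then 1 else 0

namespace Stmt4Aux

/-- indicator vector of a single coordinate -/
def ind {k : ℕ} (a : Fin k) : Fin k → ℝ := fun l => if l = a then 1 else 0

/-- the incidence row vector of an unordered pair -/
def Wsym {k : ℕ} : Sym2 (Fin k) → (Fin k → ℝ) :=
  Sym2.lift ⟨fun i j => (fun l => if l = i ∨ l = j then 1 else 0), by
    intro i j; funext l; simp [or_comm]⟩

lemma Wsym_mk {k : ℕ} (i j : Fin k) :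
    Wsym s(i, j) = fun l => if l = i ∨ l = j then 1 else 0 := rfl

lemma Wsym_eq_ind_add {k : ℕ} {i j : Fin k} (hij : i ≠ j) :
    Wsym s(i, j) = ind i + ind j := by
  funext l
  simp only [Wsym_mk, ind, Pi.add_apply]
  rcases eq_or_ne l i with rfl | h1
  · simp [hij]
  · rcases eq_or_ne l j with rfl | h2
    · simp [h1]
    · simp [h1, h2]

lemma sum_indicator_mul {k : ℕ} (T : Finset (Fin k)) (f y : Fin k → ℝ)
    (hf : ∀ l, f l = if l ∈ T then 1 else 0) :
    ∑ l, f l * y l = ∑ l ∈ T, y l := by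
  have : ∀ l ∈ Finset.univ, f l * y l = if l ∈ T then y l else 0 := by
    intro l _
    rw [hf l]
    by_cases h : l ∈ T <;> simp [h]
  rw [Finset.sum_congr rfl this, Finset.sum_ite_mem, Finset.univ_inter]

lemma mulVec_indicator {m k : ℕ} {M : Matrix (Fin m) (Fin k) ℝ} {r : Fin m}
    (T : Finset (Fin k)) (hf : ∀ l, M r l = if l ∈ T then 1 else 0) (y : Fin k → ℝ) :
    M.mulVec y r = ∑ l ∈ T, y l := by
  rw [Matrix.mulVec, dotProduct]
  exact sum_indicator_mul T _ y hf

lemma mulVec_edgeRow {m k : ℕ} {M : Matrix (Fin m) (Fin k) ℝ} {r : Fin m} {i j : Fin k}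
    (hij : i ≠ j) (h : IsEdgeRow M r i j) (y : Fin k → ℝ) :
    M.mulVec y r = y i + y j := by
  rw [mulVec_indicator ({i, j} : Finset (Fin k)) (fun l => by
    rw [h l]; simp [Finset.mem_insert]), Finset.sum_pair hij]

lemma edgeRow_pair_eq {k : ℕ} {i j i' j' : Fin k} (hij : i ≠ j)
    (h : ∀ l : Fin k, (if l = i ∨ l = j then (1:ℝ) else 0) = if l = i' ∨ l = j' then 1 else 0) :
    (i = i' ∧ j = j') ∨ (i = j' ∧ j = i') := by
  have hi := h i
  have hj := h j
  simp only [true_or, or_true, if_true] at hi hj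
  have hi' : i = i' ∨ i = j' := by
    by_contra hc; push_neg at hc; simp [hc.1, hc.2] at hi
  have hj' : j = i' ∨ j = j' := by
    by_contra hc; push_neg at hc; simp [hc.1, hc.2] at hj
  rcases hi' with h1 | h1
  · rcases hj' with h2 | h2
    · exact absurd (h1.trans h2.symm) hij
    · exact Or.inl ⟨h1, h2⟩
  · rcases hj' with h2 | h2
    · exact Or.inr ⟨h1, h2⟩
    · exact absurd (h1.trans h2.symm) hij

lemma isEdgeRow_symm {m k : ℕ} {M : Matrix (Fin m) (Fin k) ℝ} {r : Fin m} {i j : Fin k}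
    (h : IsEdgeRow M r i j) : IsEdgeRow M r j i := by
  intro l; rw [h l]; by_cases h1 : l = i <;> by_cases h2 : l = j <;> simp [h1, h2]

lemma walk_parity {k : ℕ} {G : SimpleGraph (Fin k)} (x : Fin k → ℝ)
    (hsum : ∀ a b, G.Adj a b → x a + x b = 0) {a b : Fin k} (p : G.Walk a b) :
    x b = (-1 : ℝ) ^ p.length * x a := by
  induction p with
  | nil => simp
  | @cons u v w h p ih =>
      have hx : x v = - x u := by linarith [hsum u v h]
      rw [SimpleGraph.Walk.length_cons, ih, hx]
      ring

/-- alternating sum of a list of vectors -/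
def altSum {k : ℕ} : List (Fin k → ℝ) → (Fin k → ℝ)
  | [] => 0
  | v :: t => v - altSum t

lemma altSum_eq {k : ℕ} (L : List (Fin k → ℝ)) :
    altSum L = ∑ t : Fin L.length, ((-1 : ℝ) ^ (t : ℕ)) • L.get t := by
  induction L with
  | nil => simp [altSum]
  | cons e T ih =>
      rw [show altSum (e :: T) = e - altSum T from rfl, ih]
      simp only [List.length_cons]
      rw [Fin.sum_univ_succ]
      simp only [Fin.val_zero, pow_zero, one_smul, Fin.val_succ, List.get_cons_succ,
        List.get_cons_zero, pow_succ]
      have hterm : ∀ t : Fin T.length,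
          ((-1 : ℝ) ^ (t : ℕ) * -1) • T.get t = -(((-1 : ℝ) ^ (t : ℕ)) • T.get t) := by
        intro t
        rw [mul_comm, ← neg_smul, neg_one_mul]
      have : ∀ x : Fin T.length, ((-1 : ℝ) ^ (x : ℕ) * -1) • (e :: T).get x.succ
          = -(((-1 : ℝ) ^ (x : ℕ)) • T.get x) := by
        intro x
        have hg : (e :: T).get x.succ = T.get x := rfl
        rw [hg]
        exact hterm x
      rw [Finset.sum_congr rfl (fun t _ => this t), Finset.sum_neg_distrib, sub_eq_add_neg]

lemma walk_altSum {k : ℕ} {G : SimpleGraph (Fin k)} {a b : Fin k} (p : G.Walk a b) :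
    altSum (p.edges.map Wsym) = ind a - (-1 : ℝ) ^ p.length • ind b := by
  induction p with
  | nil => simp [altSum]
  | @cons u v w h p ih =>
      rw [SimpleGraph.Walk.edges_cons, List.map_cons,
        show altSum (Wsym s(u, v) :: (p.edges.map Wsym)) = Wsym s(u, v) - altSum (p.edges.map Wsym) from rfl,
        ih, Wsym_eq_ind_add (G.ne_of_adj h), SimpleGraph.Walk.length_cons]
      funext l
      simp only [Pi.sub_apply, Pi.add_apply, Pi.smul_apply, smul_eq_mul, pow_succ]
      ring

lemma tree_adj_dist_ne {k : ℕ} {G : SimpleGraph (Fin k)} (hG : G.IsTree) (v0 : Fin k)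
    {i j : Fin k} (hadj : G.Adj i j) : G.dist v0 i ≠ G.dist v0 j := by
  classical
  intro heq
  have hconn : G.Connected := hG.isConnected
  obtain ⟨p, hp, hpl⟩ := (hconn v0 i).exists_path_of_dist
  obtain ⟨q, hq, hql⟩ := (hconn v0 j).exists_path_of_dist
  have hij : i ≠ j := G.ne_of_adj hadj
  have hiq : i ∉ q.support := by
    intro hi
    have h1 : (q.takeUntil i hi).length + (q.dropUntil i hi).length = q.length := by
      have := congrArg SimpleGraph.Walk.length (q.take_spec hi)
      rwa [SimpleGraph.Walk.length_append] at this
    have h2 : G.dist v0 i ≤ (q.takeUntil i hi).length := SimpleGraph.dist_le _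
    have h3 : (q.dropUntil i hi).length ≠ 0 := by
      intro h0
      exact hij (SimpleGraph.Walk.eq_of_length_eq_zero h0)
    omega
  have hq' : (q.concat hadj.symm).IsPath := by
    rw [← SimpleGraph.Walk.isPath_reverse_iff, SimpleGraph.Walk.reverse_concat]
    refine SimpleGraph.Walk.IsPath.cons hq.reverse ?_
    rwa [SimpleGraph.Walk.support_reverse, List.mem_reverse]
  have huniq := hG.existsUnique_path v0 i
  have := (huniq.unique hp hq' : p = q.concat hadj.symm)
  have hlen := congrArg SimpleGraph.Walk.length this
  rw [SimpleGraph.Walk.length_concat] at hlen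
  omega

lemma tree_adj_parity {k : ℕ} {G : SimpleGraph (Fin k)} (hG : G.IsTree) (v0 : Fin k)
    {i j : Fin k} (hadj : G.Adj i j) : Even (G.dist v0 i) ↔ ¬ Even (G.dist v0 j) := by
  have hne := tree_adj_dist_ne hG v0 hadj
  have hconn := hG.isConnected
  have hd1 : G.dist i j ≤ 1 := by
    have := SimpleGraph.dist_le (SimpleGraph.Walk.cons hadj SimpleGraph.Walk.nil)
    simpa using this
  have hd2 : G.dist j i ≤ 1 := by rwa [SimpleGraph.dist_comm]
  have t1 : G.dist v0 i ≤ G.dist v0 j + 1 :=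
    le_trans (hconn.dist_triangle (v := j)) (by omega)
  have t2 : G.dist v0 j ≤ G.dist v0 i + 1 :=
    le_trans (hconn.dist_triangle (v := i)) (by omega)
  rw [Nat.even_iff, Nat.even_iff]
  omega

lemma mulVec_zero_row {m k : ℕ} {M : Matrix (Fin m) (Fin k) ℝ} {r : Fin m}
    (h : ∀ l, M r l = 0) (y : Fin k → ℝ) : M.mulVec y r = 0 := by
  rw [Matrix.mulVec, dotProduct]
  apply Finset.sum_eq_zero
  intro l _
  rw [h l, zero_mul]

lemma backward {m k : ℕ} (hk : 1 ≤ k) (M : Matrix (Fin m) (Fin k) ℝ)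
    (h01 : ∀ i j, M i j = 0 ∨ M i j = 1) (G : SimpleGraph (Fin k)) (hG : G.IsTree)
    (h2 : ∀ r : Fin m, (∃ l, M r l ≠ 0) → ∃ i j, G.Adj i j ∧ IsEdgeRow M r i j)
    (h3 : ∀ i j, G.Adj i j → ∃! r, IsEdgeRow M r i j) :
    ((M.rank = k - 1 ∧ ∃ x : Fin k → ℝ, M.mulVec x = 0 ∧ ∀ j, x j ≠ 0) ∧
      Set.ncard {p : Fin m × Fin k | M p.1 p.2 = 1} = 2 * k - 2) := by
  classical
  have hconn : G.Connected := hG.isConnected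
  set v0 : Fin k := ⟨0, hk⟩ with hv0
  set x : Fin k → ℝ := fun u => if Even (G.dist v0 u) then (1:ℝ) else -1 with hxdef
  have hx0 : ∀ u, x u ≠ 0 := by
    intro u; by_cases h : Even (G.dist v0 u) <;> simp [hxdef, h]
  have hxsq : ∀ u, x u * x u = 1 := by
    intro u; by_cases h : Even (G.dist v0 u) <;> simp [hxdef, h]
  have hsum : ∀ a b, G.Adj a b → x a + x b = 0 := by
    intro a b hadj
    have hpar := tree_adj_parity hG v0 hadj
    by_cases h : Even (G.dist v0 a)
    · have : ¬ Even (G.dist v0 b) := hpar.mp h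
      simp [hxdef, h, this]
    · have : Even (G.dist v0 b) := by
        by_contra hb
        exact h (hpar.mpr hb)
      simp [hxdef, h, this]
  -- rows are either zero rows or edge rows
  have hMx : M.mulVec x = 0 := by
    funext r
    by_cases hr : ∃ l, M r l ≠ 0
    · obtain ⟨i, j, hadj, hrow⟩ := h2 r hr
      rw [Pi.zero_apply, mulVec_edgeRow (G.ne_of_adj hadj) hrow x]
      exact hsum i j hadj
    · push_neg at hr
      exact mulVec_zero_row hr x
  -- kernel is spanned by x
  have hker : LinearMap.ker M.mulVecLin = Submodule.span ℝ {x} := by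
    apply le_antisymm
    · intro y hy
      have hy' : M.mulVec y = 0 := by
        rwa [LinearMap.mem_ker, Matrix.mulVecLin_apply] at hy
      set c : ℝ := y v0 * x v0 with hc
      set z : Fin k → ℝ := fun u => y u - c * x u with hz
      have hzv0 : z v0 = 0 := by
        have h1 : c * x v0 = y v0 := by
          have h := hxsq v0
          calc c * x v0 = y v0 * (x v0 * x v0) := by ring
          _ = y v0 := by rw [h, mul_one]
        simp [hz, h1]
      have hzsum : ∀ a b, G.Adj a b → z a + z b = 0 := by
        intro a b hadj
        obtain ⟨r, hrow, -⟩ := h3 a b hadj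
        have hne := G.ne_of_adj hadj
        have e1 : y a + y b = 0 := by
          rw [← mulVec_edgeRow hne hrow y, hy']; rfl
        have e2 : x a + x b = 0 := hsum a b hadj
        have e3 : y a - c * x a + (y b - c * x b) = (y a + y b) - c * (x a + x b) := by
          ring
        simp only [hz]
        rw [e3, e1, e2, mul_zero, sub_zero]
      have hzall : ∀ u, z u = 0 := by
        intro u
        obtain ⟨p⟩ := hconn v0 u
        rw [walk_parity z hzsum p, hzv0, mul_zero]
      rw [Submodule.mem_span_singleton]
      refine ⟨c, ?_⟩
      funext u
      have := hzall u
      simp only [hz] at this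
      simp only [Pi.smul_apply, smul_eq_mul]
      linarith
    · rw [Submodule.span_le, Set.singleton_subset_iff]
      rw [SetLike.mem_coe, LinearMap.mem_ker, Matrix.mulVecLin_apply]
      exact hMx
  have hrank : M.rank = k - 1 := by
    have hrn := LinearMap.finrank_range_add_finrank_ker M.mulVecLin
    have hfin : Module.finrank ℝ (Fin k → ℝ) = k := by
      rw [Module.finrank_fintype_fun_eq_card, Fintype.card_fin]
    have hxne : x ≠ 0 := fun h => hx0 v0 (congrFun h v0)
    have hkone : Module.finrank ℝ (LinearMap.ker M.mulVecLin) = 1 := by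
      rw [hker]; exact finrank_span_singleton hxne
    have hrdef : M.rank = Module.finrank ℝ (LinearMap.range M.mulVecLin) := rfl
    omega
  refine ⟨⟨hrank, x, hMx, hx0⟩, ?_⟩
  -- counting ones
  set N : Finset (Fin m) := univ.filter (fun r => ∃ l, M r l ≠ 0) with hN
  have hcount : Set.ncard {p : Fin m × Fin k | M p.1 p.2 = 1}
      = ∑ r : Fin m, #(univ.filter (fun l => M r l = 1)) := by
    have hset : {p : Fin m × Fin k | M p.1 p.2 = 1}
        = ↑(univ.filter (fun p : Fin m × Fin k => M p.1 p.2 = 1)) := by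
      ext p; simp
    rw [hset, Set.ncard_coe_finset, Finset.card_filter]
    rw [Fintype.sum_prod_type]
    congr 1
    funext r
    rw [Finset.card_filter]
  have hrow2 : ∀ r ∈ N, #(univ.filter (fun l => M r l = 1)) = 2 := by
    intro r hr
    rw [hN, mem_filter] at hr
    obtain ⟨i, j, hadj, hrow⟩ := h2 r hr.2
    have hne := G.ne_of_adj hadj
    have : univ.filter (fun l => M r l = 1) = {i, j} := by
      ext l
      simp only [mem_filter, mem_univ, true_and, mem_insert, mem_singleton]
      rw [hrow l]
      by_cases h : l = i ∨ l = j
      · simp [h]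
      · push_neg at h
        simp [h.1, h.2]
    rw [this, Finset.card_pair hne]
  have hrow0 : ∀ r ∉ N, #(univ.filter (fun l => M r l = 1)) = 0 := by
    intro r hr
    rw [hN, mem_filter] at hr
    push_neg at hr
    have hz := hr (mem_univ r)
    rw [Finset.card_eq_zero]
    ext l
    simp [hz l]
  have hsumN : ∑ r : Fin m, #(univ.filter (fun l => M r l = 1)) = 2 * N.card := by
    calc ∑ r : Fin m, #(univ.filter (fun l => M r l = 1))
        = ∑ r ∈ N, #(univ.filter (fun l => M r l = 1)) :=
          (Finset.sum_subset (Finset.subset_univ N) (fun r _ hr => hrow0 r hr)).symm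
      _ = ∑ _r ∈ N, 2 := Finset.sum_congr rfl hrow2
      _ = 2 * N.card := by rw [Finset.sum_const, smul_eq_mul, mul_comm]
  -- N.card = number of edges
  have hNcard : N.card = G.edgeFinset.card := by
    have h2' : ∀ r ∈ N, ∃ p : Fin k × Fin k, G.Adj p.1 p.2 ∧ IsEdgeRow M r p.1 p.2 := by
      intro r hr
      rw [hN, mem_filter] at hr
      obtain ⟨i, j, hadj, hrow⟩ := h2 r hr.2
      exact ⟨(i, j), hadj, hrow⟩
    choose e hadj hrow using h2'
    apply Finset.card_bij (i := fun r hr => s((e r hr).1, (e r hr).2))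
    · intro r hr
      rw [SimpleGraph.mem_edgeFinset, SimpleGraph.mem_edgeSet]
      exact hadj r hr
    · intro r1 hr1 r2 hr2 heq
      have hne1 : (e r1 hr1).1 ≠ (e r1 hr1).2 := G.ne_of_adj (hadj r1 hr1)
      have hrow2' : IsEdgeRow M r2 (e r1 hr1).1 (e r1 hr1).2 := by
        rcases Sym2.eq_iff.mp heq with ⟨ha, hb⟩ | ⟨ha, hb⟩
        · rw [ha, hb]; exact hrow r2 hr2
        · rw [ha, hb]; exact isEdgeRow_symm (hrow r2 hr2)
      obtain ⟨r0, -, hu⟩ := h3 _ _ (hadj r1 hr1)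
      rw [hu r1 (hrow r1 hr1), hu r2 hrow2']
    · intro ed hed
      rw [SimpleGraph.mem_edgeFinset] at hed
      induction ed with
      | _ a b =>
        have hab : G.Adj a b := hed
        obtain ⟨r, hr, -⟩ := h3 a b hab
        have hrN : r ∈ N := by
          rw [hN, mem_filter]
          refine ⟨mem_univ r, a, ?_⟩
          rw [hr a]
          simp
        refine ⟨r, hrN, ?_⟩
        have hcmp := edgeRow_pair_eq (G.ne_of_adj (hadj r hrN))
          (fun l => ((hrow r hrN) l).symm.trans (hr l))
        rw [Sym2.eq_iff]
        exact hcmp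
  have hedges : G.edgeFinset.card + 1 = k := by
    have := hG.card_edgeFinset
    rwa [Fintype.card_fin] at this
  rw [hcount, hsumN, hNcard]
  omega

lemma forward {m k : ℕ} (hk : 1 ≤ k) (M : Matrix (Fin m) (Fin k) ℝ)
    (h01 : ∀ i j, M i j = 0 ∨ M i j = 1)
    (hrank : M.rank = k - 1) (x : Fin k → ℝ) (hMx : M.mulVec x = 0) (hx0 : ∀ j, x j ≠ 0)
    (hones : Set.ncard {p : Fin m × Fin k | M p.1 p.2 = 1} = 2 * k - 2) :
    ∃ G : SimpleGraph (Fin k), G.IsTree ∧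
        (∀ r : Fin m, (∃ l, M r l ≠ 0) → ∃ i j, G.Adj i j ∧ IsEdgeRow M r i j) ∧
        (∀ i j, G.Adj i j → ∃! r, IsEdgeRow M r i j) := by
  classical
  set v0 : Fin k := ⟨0, hk⟩ with hv0
  set N : Finset (Fin m) := univ.filter (fun r => ∃ l, M r l ≠ 0) with hN
  set T : Fin m → Finset (Fin k) := fun r => univ.filter (fun l => M r l = 1) with hT
  have hind : ∀ r l, M r l = if l ∈ T r then 1 else 0 := by
    intro r l
    rcases h01 r l with h | h
    · simp [hT, h]
    · simp [hT, h]
  -- the number of ones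
  have hcount : Set.ncard {p : Fin m × Fin k | M p.1 p.2 = 1} = ∑ r : Fin m, #(T r) := by
    have hset : {p : Fin m × Fin k | M p.1 p.2 = 1}
        = ↑(univ.filter (fun p : Fin m × Fin k => M p.1 p.2 = 1)) := by ext p; simp
    rw [hset, Set.ncard_coe_finset, Finset.card_filter, Fintype.sum_prod_type]
    congr 1
    funext r
    rw [hT, Finset.card_filter]
  -- each nonzero row has at least two ones
  have hzeroT : ∀ r ∉ N, T r = ∅ := by
    intro r hr
    rw [hN, mem_filter] at hr
    push_neg at hr
    have hz := hr (mem_univ r)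
    rw [hT]
    ext l
    simp [hz l]
  have hgeq2 : ∀ r ∈ N, 2 ≤ #(T r) := by
    intro r hr
    rw [hN, mem_filter] at hr
    obtain ⟨l0, hl0⟩ := hr.2
    have hl1 : M r l0 = 1 := (h01 r l0).resolve_left hl0
    have hne : (T r).Nonempty := ⟨l0, by simp [hT, hl1]⟩
    rcases Nat.lt_or_ge #(T r) 2 with h | h
    · exfalso
      interval_cases hc : #(T r)
      · rw [Finset.card_eq_zero] at hc
        exact absurd hc (Finset.nonempty_iff_ne_empty.mp hne)
      · rw [Finset.card_eq_one] at hc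
        obtain ⟨i, hi⟩ := hc
        have := mulVec_indicator (T r) (hind r) x
        rw [hi, Finset.sum_singleton] at this
        rw [hMx] at this
        exact hx0 i this.symm
    · exact h
  -- span of the distinct nonzero rows
  set D : Finset (Fin k → ℝ) := N.image (fun r => M r) with hD
  have hMzero : ∀ r ∉ N, M r = 0 := by
    intro r hr
    funext l
    have := hzeroT r hr
    rw [hind r l, this]
    simp
  have hspan : Submodule.span ℝ (↑D : Set (Fin k → ℝ)) = Submodule.span ℝ (Set.range M) := by
    apply le_antisymm
    · rw [Submodule.span_le]
      intro w hw
      rw [Finset.coe_image] at hw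
      obtain ⟨r, -, rfl⟩ := hw
      exact Submodule.subset_span ⟨r, rfl⟩
    · rw [Submodule.span_le]
      rintro w ⟨r, rfl⟩
      by_cases hr : r ∈ N
      · exact Submodule.subset_span (by rw [Finset.coe_image]; exact ⟨r, hr, rfl⟩)
      · rw [hMzero r hr]
        simp
  have hfr : Module.finrank ℝ (Submodule.span ℝ (↑D : Set (Fin k → ℝ))) = k - 1 := by
    have h1 := Matrix.rank_eq_finrank_span_cols M.transpose
    rw [Matrix.rank_transpose, Matrix.col, Matrix.transpose_transpose, hrank] at h1
    rw [hspan, ← h1]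
  have hDcard_ge : k - 1 ≤ #D := by
    have : Set.finrank ℝ (↑D : Set (Fin k → ℝ)) ≤ #D := finrank_span_finset_le_card D
    exact le_trans (le_of_eq hfr.symm) this
  have hDN : #D ≤ #N := Finset.card_image_le
  -- counting forces everything to be tight
  have hsum_all : ∑ r : Fin m, #(T r) = 2 * k - 2 := by rw [← hcount, hones]
  have hsumN : ∑ r ∈ N, #(T r) = 2 * k - 2 := by
    rw [← hsum_all]
    exact Finset.sum_subset (Finset.subset_univ N) (fun r _ hr => by
      rw [hzeroT r hr, Finset.card_empty])
  have hNle : 2 * #N ≤ 2 * k - 2 := by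
    calc 2 * #N = ∑ _r ∈ N, 2 := by rw [Finset.sum_const, smul_eq_mul, mul_comm]
    _ ≤ ∑ r ∈ N, #(T r) := Finset.sum_le_sum hgeq2
    _ = 2 * k - 2 := hsumN
  have hNcard : #N = k - 1 := by omega
  have hDcard : #D = k - 1 := by omega
  have heq2 : ∀ r ∈ N, #(T r) = 2 := by
    intro r hr
    by_contra hne
    have h3 : 2 < #(T r) := lt_of_le_of_ne (hgeq2 r hr) (fun h => hne h.symm)
    have : ∑ _r ∈ N, 2 < ∑ r ∈ N, #(T r) :=
      Finset.sum_lt_sum hgeq2 ⟨r, hr, h3⟩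
    rw [Finset.sum_const, smul_eq_mul, hsumN] at this
    omega
  have hinj : Set.InjOn (fun r => M r) ↑N := by
    apply Finset.card_image_iff.mp
    rw [← hD, hDcard, hNcard]
  -- every nonzero row is an edge row
  have hedge : ∀ r ∈ N, ∃ i j, i ≠ j ∧ IsEdgeRow M r i j := by
    intro r hr
    obtain ⟨i, j, hij, hTr⟩ := Finset.card_eq_two.mp (heq2 r hr)
    refine ⟨i, j, hij, fun l => ?_⟩
    rw [hind r l, hTr]
    simp [Finset.mem_insert]
  -- membership in N from an edge row
  have hmemN : ∀ (r : Fin m) (i j : Fin k), IsEdgeRow M r i j → r ∈ N := by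
    intro r i j hrow
    rw [hN, mem_filter]
    refine ⟨mem_univ r, i, ?_⟩
    rw [hrow i]
    simp
  -- the graph
  set G : SimpleGraph (Fin k) :=
    { Adj := fun i j => i ≠ j ∧ ∃ r, IsEdgeRow M r i j
      symm := ⟨by
        rintro i j ⟨hne, r, hrow⟩
        exact ⟨hne.symm, r, isEdgeRow_symm hrow⟩⟩
      loopless := ⟨fun i h => h.1 rfl⟩ } with hG
  have hGadj : ∀ i j, G.Adj i j ↔ (i ≠ j ∧ ∃ r, IsEdgeRow M r i j) := fun i j => Iff.rfl
  have hprop2 : ∀ r : Fin m, (∃ l, M r l ≠ 0) → ∃ i j, G.Adj i j ∧ IsEdgeRow M r i j := by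
    intro r hr
    have hrN : r ∈ N := by rw [hN, mem_filter]; exact ⟨mem_univ r, hr⟩
    obtain ⟨i, j, hij, hrow⟩ := hedge r hrN
    exact ⟨i, j, ⟨hij, r, hrow⟩, hrow⟩
  have hprop3 : ∀ i j, G.Adj i j → ∃! r, IsEdgeRow M r i j := by
    rintro i j ⟨hne, r, hrow⟩
    refine ⟨r, hrow, ?_⟩
    intro r' hrow'
    have h1 : M r' = M r := by
      funext l
      rw [hrow' l, hrow l]
    exact hinj (hmemN r' i j hrow') (hmemN r i j hrow) h1
  -- sums along adjacent vertices vanish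
  have hsadj : ∀ a b, G.Adj a b → x a + x b = 0 := by
    rintro a b ⟨hne, r, hrow⟩
    rw [← mulVec_edgeRow hne hrow x, hMx]
    rfl
  -- kernel facts
  have hxker : x ∈ LinearMap.ker M.mulVecLin := by
    rw [LinearMap.mem_ker, Matrix.mulVecLin_apply]
    exact hMx
  have hker : Submodule.span ℝ {x} = LinearMap.ker M.mulVecLin := by
    apply Submodule.eq_of_le_of_finrank_eq
    · rw [Submodule.span_le, Set.singleton_subset_iff]
      exact hxker
    · have hrn := LinearMap.finrank_range_add_finrank_ker M.mulVecLin
      have hfin : Module.finrank ℝ (Fin k → ℝ) = k := by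
        rw [Module.finrank_fintype_fun_eq_card, Fintype.card_fin]
      have hxne : x ≠ 0 := fun h => hx0 v0 (congrFun h v0)
      have hsp1 : Module.finrank ℝ (Submodule.span ℝ {x}) = 1 := finrank_span_singleton hxne
      have hrdef : M.rank = Module.finrank ℝ (LinearMap.range M.mulVecLin) := rfl
      omega
  -- connectivity
  have hreach : ∀ u, G.Reachable v0 u := by
    intro u
    set y : Fin k → ℝ := fun w => if G.Reachable v0 w then x w else 0 with hy
    have hMy : M.mulVec y = 0 := by
      funext r
      by_cases hr : r ∈ N
      · obtain ⟨i, j, hij, hrow⟩ := hedge r hr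
        have hadj : G.Adj i j := ⟨hij, r, hrow⟩
        rw [Pi.zero_apply, mulVec_edgeRow hij hrow y]
        by_cases hri : G.Reachable v0 i
        · have hrj : G.Reachable v0 j := hri.trans hadj.reachable
          rw [hy]
          simp only [hri, hrj, if_true]
          exact hsadj i j hadj
        · have hrj : ¬ G.Reachable v0 j := fun h => hri (h.trans hadj.symm.reachable)
          simp [hy, hri, hrj]
      · rw [Pi.zero_apply]
        have hz := hMzero r hr
        exact mulVec_zero_row (fun l => congrFun hz l) y
    have hyker : y ∈ Submodule.span ℝ {x} := by
      rw [hker, LinearMap.mem_ker, Matrix.mulVecLin_apply]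
      exact hMy
    obtain ⟨c, hc⟩ := Submodule.mem_span_singleton.mp hyker
    have hcv0 : c * x v0 = x v0 := by
      have := congrFun hc v0
      simp only [Pi.smul_apply, smul_eq_mul] at this
      rw [this, hy]
      simp [SimpleGraph.Reachable.refl]
    have hc1 : c = 1 := by
      have := mul_right_cancel₀ (hx0 v0) (hcv0.trans (one_mul (x v0)).symm)
      exact this
    have hyu : y u = x u := by
      have := congrFun hc u
      simp only [Pi.smul_apply, smul_eq_mul, hc1, one_mul] at this
      exact this.symm
    by_contra hru
    rw [hy] at hyu
    simp only [hru, if_false] at hyu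
    exact hx0 u hyu.symm
  have hconn : G.Connected := by
    rw [SimpleGraph.connected_iff]
    exact ⟨fun a b => (hreach a).symm.trans (hreach b), ⟨v0⟩⟩
  -- acyclicity
  have hWD : ∀ e ∈ G.edgeSet, Wsym e ∈ D := by
    intro e he
    induction e with
    | _ a b =>
      rw [SimpleGraph.mem_edgeSet] at he
      obtain ⟨hne, r, hrow⟩ := he
      rw [hD, Finset.mem_image]
      refine ⟨r, hmemN r a b hrow, ?_⟩
      funext l
      rw [hrow l, Wsym_mk]
  have hWinj : ∀ e ∈ G.edgeSet, ∀ e' ∈ G.edgeSet, Wsym e = Wsym e' → e = e' := by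
    intro e he e' he' heq
    induction e with
    | _ a b =>
      induction e' with
      | _ a' b' =>
        rw [SimpleGraph.mem_edgeSet] at he he'
        have hne : a ≠ b := he.1
        have heq' : ∀ l : Fin k, (if l = a ∨ l = b then (1:ℝ) else 0)
            = if l = a' ∨ l = b' then 1 else 0 := by
          intro l
          have := congrFun heq l
          rwa [Wsym_mk, Wsym_mk] at this
        rw [Sym2.eq_iff]
        exact edgeRow_pair_eq hne heq'
  have hacyc : G.IsAcyclic := by
    intro v c hc
    have hlen3 : 3 ≤ c.length := hc.three_le_length
    have heven : Even c.length := by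
      have hp := walk_parity x hsadj c
      have h1 : (1 : ℝ) * x v = (-1 : ℝ) ^ c.length * x v := by rw [one_mul]; exact hp
      have h2 : ((-1 : ℝ)) ^ c.length = 1 := (mul_right_cancel₀ (hx0 v) h1).symm
      exact (neg_one_pow_eq_one_iff_even (by norm_num)).mp h2
    set L : List (Fin k → ℝ) := c.edges.map Wsym with hL
    have hLnodup : L.Nodup := by
      apply List.Nodup.map_on
      · intro e he e' he' heq
        exact hWinj e (c.edges_subset_edgeSet he) e' (c.edges_subset_edgeSet he') heq
      · exact hc.isTrail.edges_nodup
    have hLD : ∀ w ∈ L, w ∈ D := by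
      intro w hw
      rw [hL, List.mem_map] at hw
      obtain ⟨e, he, rfl⟩ := hw
      exact hWD e (c.edges_subset_edgeSet he)
    have haltz : altSum L = 0 := by
      rw [hL, walk_altSum c, heven.neg_one_pow, one_smul, sub_self]
    have hLlen : L.length = c.length := by
      rw [hL, List.length_map, SimpleGraph.Walk.length_edges]
    rcases hL' : L with _ | ⟨w0, L'⟩
    · rw [hL'] at hLlen
      simp at hLlen
      omega
    · rw [hL'] at haltz hLnodup hLD
      rw [show altSum (w0 :: L') = w0 - altSum L' from rfl] at haltz
      have hw0 : w0 = altSum L' := sub_eq_zero.mp haltz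
      have hw0D : w0 ∈ D := hLD w0 (List.mem_cons_self (a := w0) (l := L'))
      have hw0span : w0 ∈ Submodule.span ℝ (↑(D.erase w0) : Set (Fin k → ℝ)) := by
        have h2 : altSum L' ∈ Submodule.span ℝ (↑(D.erase w0) : Set (Fin k → ℝ)) := by
          rw [altSum_eq L']
          apply Submodule.sum_mem
          intro t _
          apply Submodule.smul_mem
          apply Submodule.subset_span
          have hmem : L'.get t ∈ L' := List.get_mem L' t
          have hne : L'.get t ≠ w0 := fun h =>
            ((List.nodup_cons.mp hLnodup).1) (h ▸ hmem)
          rw [Finset.mem_coe, Finset.mem_erase]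
          exact ⟨hne, hLD _ (List.mem_cons_of_mem w0 hmem)⟩
        rw [← hw0] at h2
        exact h2
      have hsp2 : Submodule.span ℝ (↑D : Set (Fin k → ℝ))
          = Submodule.span ℝ (↑(D.erase w0) : Set (Fin k → ℝ)) := by
        apply le_antisymm
        · rw [Submodule.span_le]
          intro w hw
          rcases eq_or_ne w w0 with rfl | hne
          · exact hw0span
          · exact Submodule.subset_span
              (Finset.mem_coe.mpr (Finset.mem_erase.mpr ⟨hne, Finset.mem_coe.mp hw⟩))
        · apply Submodule.span_mono
          intro w hw
          exact Finset.mem_coe.mpr (Finset.mem_erase.mp (Finset.mem_coe.mp hw)).2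
      have hle : Module.finrank ℝ (Submodule.span ℝ (↑(D.erase w0) : Set (Fin k → ℝ)))
          ≤ #(D.erase w0) := finrank_span_finset_le_card (D.erase w0)
      have hcard_erase : #(D.erase w0) = #D - 1 := Finset.card_erase_of_mem hw0D
      have hDpos : 0 < #D := Finset.card_pos.mpr ⟨w0, hw0D⟩
      rw [hsp2] at hfr
      omega
  exact ⟨G, ⟨hconn, hacyc⟩, hprop2, hprop3⟩

end Stmt4Aux

/-- A {0,1}-matrix with `k` columns is a minimal linear dependency with exactly `2k - 2` ones
if and only if its nonzero rows form the edge-vertex incidence matrix of a tree on `k`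
vertices. -/
theorem stmt4 {m k : ℕ} (hk : 1 ≤ k) (M : Matrix (Fin m) (Fin k) ℝ)
    (h01 : ∀ i j, M i j = 0 ∨ M i j = 1) :
    ((M.rank = k - 1 ∧ ∃ x : Fin k → ℝ, M.mulVec x = 0 ∧ ∀ j, x j ≠ 0) ∧
      Set.ncard {p : Fin m × Fin k | M p.1 p.2 = 1} = 2 * k - 2)
    ↔ ∃ G : SimpleGraph (Fin k), G.IsTree ∧
        (∀ r : Fin m, (∃ l, M r l ≠ 0) → ∃ i j, G.Adj i j ∧ IsEdgeRow M r i j) ∧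
        (∀ i j, G.Adj i j → ∃! r, IsEdgeRow M r i j) := by
  constructor
  · rintro ⟨⟨hrank, x, hMx, hx0⟩, hones⟩
    exact Stmt4Aux.forward hk M h01 hrank x hMx hx0 hones
  · rintro ⟨G, hG, h2, h3⟩
    exact Stmt4Aux.backward hk M h01 G hG h2 h3
end

section
/- Let A ∈ ℝ^{n×m} and let A' ∈ ℝ^{(n−1)×(m−1)} be obtained from A by deleting a column that contains exactly one nonzero entry (equal to 1) together with the row containing that entry. Then corank(A) = corank(A'), where corank of a matrix with m columns is m minus its rank. Moreover, the union of supports of vectors in the kernel of A', viewed as a subset of the remaining column indices, is contained in the union of supports of vectors in the kernel of A. -/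
/-- One-sided leaf removal: deleting from `A` a column `j₀` containing a single nonzero entry
(equal to `1`, at row `i₀`) together with row `i₀` preserves the corank, and the union of
supports of kernel vectors of the reduced matrix is contained in that of `A`. -/
theorem stmt7 {n m : ℕ} (A : Matrix (Fin n) (Fin m) ℝ) (i0 : Fin n) (j0 : Fin m)
    (h1 : A i0 j0 = 1) (h0 : ∀ i, i ≠ i0 → A i j0 = 0) :
    (m - A.rank =
      (m - 1) - (A.submatrix (Subtype.val : {i : Fin n // i ≠ i0} → Fin n)
        (Subtype.val : {j : Fin m // j ≠ j0} → Fin m)).rank) ∧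
    ∀ x' : {j : Fin m // j ≠ j0} → ℝ,
      (A.submatrix (Subtype.val : {i : Fin n // i ≠ i0} → Fin n)
        (Subtype.val : {j : Fin m // j ≠ j0} → Fin m)).mulVec x' = 0 →
      ∀ j : {j : Fin m // j ≠ j0}, x' j ≠ 0 →
        ∃ x : Fin m → ℝ, A.mulVec x = 0 ∧ x j.val ≠ 0 := by
  set A' := A.submatrix (Subtype.val : {i : Fin n // i ≠ i0} → Fin n)
        (Subtype.val : {j : Fin m // j ≠ j0} → Fin m) with hA'
  -- extension map
  set ext : ({j : Fin m // j ≠ j0} → ℝ) → (Fin m → ℝ) :=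
    fun x' j => if h : j = j0 then -(∑ k : {j : Fin m // j ≠ j0}, A i0 k.val * x' k)
      else x' ⟨j, h⟩ with hext
  -- sum splitting
  have hsplit : ∀ (i : Fin n) (x : Fin m → ℝ),
      A.mulVec x i = A i j0 * x j0 + ∑ k : {j : Fin m // j ≠ j0}, A i k.val * x k.val := by
    intro i x
    rw [Matrix.mulVec, dotProduct]
    rw [← Finset.add_sum_erase _ _ (Finset.mem_univ j0)]
    congr 1
    rw [Finset.sum_subtype (p := fun x => x ≠ j0) (s := Finset.univ.erase j0)
      (fun x => by simp [Finset.mem_erase]) (fun k => A i k * x k)]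
  have hext_ker : ∀ x' : ({j : Fin m // j ≠ j0} → ℝ), A'.mulVec x' = 0 →
      A.mulVec (ext x') = 0 := by
    intro x' hx'
    funext i
    rw [Pi.zero_apply, hsplit]
    have hvals : ∀ k : {j : Fin m // j ≠ j0}, ext x' k.val = x' k := by
      intro k; simp [hext, k.2]
    rw [show ext x' j0 = -(∑ k : {j : Fin m // j ≠ j0}, A i0 k.val * x' k) by simp [hext]]
    simp only [hvals]
    by_cases hi : i = i0
    · subst hi; rw [h1]; ring
    · rw [h0 i hi]
      have := congrFun hx' ⟨i, hi⟩
      rw [Matrix.mulVec, dotProduct] at this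
      simp only [hA', Matrix.submatrix_apply, Pi.zero_apply] at this
      rw [this]; ring
  constructor
  · -- corank equality
    have rk : ∀ {p q : Type} [Fintype p] [Fintype q] (B : Matrix p q ℝ),
        B.rank + Module.finrank ℝ (LinearMap.ker B.mulVecLin) = Fintype.card q := by
      intro p q _ _ B
      rw [Matrix.rank, LinearMap.finrank_range_add_finrank_ker, Module.finrank_pi]
    let resL : (Fin m → ℝ) →ₗ[ℝ] ({j : Fin m // j ≠ j0} → ℝ) :=
      LinearMap.funLeft ℝ ℝ Subtype.val
    have hker : ∀ x : Fin m → ℝ, x ∈ LinearMap.ker A.mulVecLin →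
        resL x ∈ LinearMap.ker A'.mulVecLin := by
      intro x hx
      rw [LinearMap.mem_ker, Matrix.mulVecLin_apply] at hx ⊢
      funext i
      have := congrFun hx i.val
      rw [Pi.zero_apply, hsplit, h0 i.val i.2, zero_mul, zero_add] at this
      rw [Matrix.mulVec, dotProduct]
      simpa [hA', resL, LinearMap.funLeft] using this
    let φ : LinearMap.ker A.mulVecLin →ₗ[ℝ] LinearMap.ker A'.mulVecLin :=
      resL.restrict hker
    have hbij : Function.Bijective φ := by
      constructor
      · intro x y hxy
        apply Subtype.ext
        have hxy' : ∀ k : {j : Fin m // j ≠ j0}, (x : Fin m → ℝ) k.val = (y : Fin m → ℝ) k.val := by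
          intro k
          have := congrArg Subtype.val hxy
          exact congrFun this k
        have hj0 : ∀ z : LinearMap.ker A.mulVecLin,
            (z : Fin m → ℝ) j0 = -∑ k : {j : Fin m // j ≠ j0}, A i0 k.val * (z : Fin m → ℝ) k.val := by
          intro z
          have hz := z.2
          rw [LinearMap.mem_ker, Matrix.mulVecLin_apply] at hz
          have := congrFun hz i0
          rw [Pi.zero_apply, hsplit, h1, one_mul] at this
          linarith
        funext j
        by_cases hj : j = j0
        · subst hj
          rw [hj0 x, hj0 y]
          congr 1
          exact Finset.sum_congr rfl fun k _ => by rw [hxy' k]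
        · exact hxy' ⟨j, hj⟩
      · rintro ⟨x', hx'⟩
        rw [LinearMap.mem_ker, Matrix.mulVecLin_apply] at hx'
        refine ⟨⟨ext x', ?_⟩, ?_⟩
        · rw [LinearMap.mem_ker, Matrix.mulVecLin_apply]
          exact hext_ker x' hx'
        · apply Subtype.ext
          funext k
          simp [φ, LinearMap.restrict_apply, resL, LinearMap.funLeft, hext, k.2]
    have hfr : Module.finrank ℝ (LinearMap.ker A.mulVecLin)
        = Module.finrank ℝ (LinearMap.ker A'.mulVecLin) :=
      (LinearEquiv.ofBijective φ hbij).finrank_eq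
    have c1 := rk A
    have c2 := rk A'
    rw [Fintype.card_fin] at c1
    have hcard : Fintype.card {j : Fin m // j ≠ j0} = m - 1 := by
      rw [Fintype.card_subtype_compl, Fintype.card_fin, Fintype.card_subtype_eq]
    rw [hcard] at c2
    omega
  · intro x' hx' j hj
    exact ⟨ext x', hext_ker x' hx', by simpa [hext, j.2] using hj⟩
end

section
/- Let A ∈ ℝ^{n×n} be the adjacency matrix of a graph G, let v be a vertex of degree one in G with unique neighbor w, and let A' be the adjacency matrix of the graph obtained from G by deleting both v and w. Then corank(A) = corank(A'). Moreover, the set of vertices appearing in the support of some kernel vector of A' is contained in the set of vertices appearing in the support of some kernel vector of A. -/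
open Matrix Finset

private lemma sum_split8 {n : ℕ} (v w : Fin n) (hvw : v ≠ w) (f : Fin n → ℝ) :
    ∑ j, f j = f v + f w + ∑ j : {u : Fin n // u ≠ v ∧ u ≠ w}, f j.val := by
  classical
  have hs : ∀ j : Fin n, j ∈ (Finset.univ \ {v, w} : Finset (Fin n)) ↔ (j ≠ v ∧ j ≠ w) := by
    intro j; simp [not_or]
  rw [← Finset.sum_subtype _ hs f, ← Finset.sum_sdiff (Finset.subset_univ ({v, w} : Finset (Fin n))),
    Finset.sum_pair hvw]
  ring

/-- Leaf removal: if `v` has degree one in `G` with unique neighbor `w`, then deleting `v` and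
`w` preserves the corank of the adjacency matrix, and the set of vertices supporting kernel
vectors of the reduced adjacency matrix is contained in that of `A`. -/
theorem stmt8 {n : ℕ} (G : SimpleGraph (Fin n)) [DecidableRel G.Adj]
    (v w : Fin n) (hdeg : G.degree v = 1) (hadj : G.Adj v w) :
    (n - (G.adjMatrix ℝ).rank =
      (n - 2) - ((G.adjMatrix ℝ).submatrix
        (Subtype.val : {u : Fin n // u ≠ v ∧ u ≠ w} → Fin n)
        (Subtype.val : {u : Fin n // u ≠ v ∧ u ≠ w} → Fin n)).rank) ∧
    ∀ x' : {u : Fin n // u ≠ v ∧ u ≠ w} → ℝ,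
      ((G.adjMatrix ℝ).submatrix
        (Subtype.val : {u : Fin n // u ≠ v ∧ u ≠ w} → Fin n)
        (Subtype.val : {u : Fin n // u ≠ v ∧ u ≠ w} → Fin n)).mulVec x' = 0 →
      ∀ u : {u : Fin n // u ≠ v ∧ u ≠ w}, x' u ≠ 0 →
        ∃ x : Fin n → ℝ, (G.adjMatrix ℝ).mulVec x = 0 ∧ x u.val ≠ 0 := by
  classical
  set S := {u : Fin n // u ≠ v ∧ u ≠ w}
  set A := G.adjMatrix ℝ with hA
  set A' := A.submatrix (Subtype.val : S → Fin n) (Subtype.val : S → Fin n) with hA'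
  have hvw : v ≠ w := hadj.ne
  -- neighborhood of v is {w}
  have hN : G.neighborFinset v = {w} := by
    have hw : w ∈ G.neighborFinset v := (SimpleGraph.mem_neighborFinset G v w).mpr hadj
    have hc : (G.neighborFinset v).card = 1 := by
      rw [SimpleGraph.card_neighborFinset_eq_degree]; exact hdeg
    obtain ⟨a, ha⟩ := Finset.card_eq_one.mp hc
    rw [ha] at hw ⊢
    rw [Finset.mem_singleton] at hw
    subst hw; rfl
  have hAdjv : ∀ u, G.Adj v u ↔ u = w := by
    intro u
    rw [← SimpleGraph.mem_neighborFinset, hN, Finset.mem_singleton]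
  have hAuv : ∀ u : Fin n, u ≠ w → A u v = 0 := by
    intro u hu
    have : ¬ G.Adj u v := fun h => hu ((hAdjv u).mp h.symm)
    simp [hA, this]
  have hAwv : A w v = 1 := by simp [hA, hadj.symm]
  have hAvv : A v v = 0 := by simp [hA]
  have hAww : A w w = 0 := by simp [hA]
  -- row v of a mulVec
  have hrowv : ∀ x : Fin n → ℝ, A.mulVec x v = x w := by
    intro x
    rw [hA, SimpleGraph.adjMatrix_mulVec_apply, hN, Finset.sum_singleton]
  -- generic mulVec as a sum
  have hmv : ∀ (x : Fin n → ℝ) (u : Fin n),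
      A.mulVec x u = A u v * x v + A u w * x w + ∑ j : S, A u j.val * x j.val := by
    intro x u
    rw [Matrix.mulVec, dotProduct]
    exact sum_split8 v w hvw (fun j => A u j * x j)
  have hmv' : ∀ (x' : S → ℝ) (u : S),
      A'.mulVec x' u = ∑ j : S, A u.val j.val * x' j := by
    intro x' u
    rw [Matrix.mulVec, dotProduct]
    rfl
  -- row w
  have hroww : ∀ x : Fin n → ℝ, A.mulVec x w = x v + ∑ j : S, A w j.val * x j.val := by
    intro x
    rw [hmv, hAwv, hAww]; ring
  -- extension map
  set ext : (S → ℝ) → (Fin n → ℝ) := fun x' j =>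
    if h : j ≠ v ∧ j ≠ w then x' ⟨j, h⟩
    else if j = v then -(∑ k : S, A w k.val * x' k) else 0 with hext
  have hext_val : ∀ (x' : S → ℝ) (j : S), ext x' j.val = x' j := by
    intro x' j
    simp only [hext]
    rw [dif_pos j.2]
  have hext_v : ∀ x' : S → ℝ, ext x' v = -(∑ k : S, A w k.val * x' k) := by
    intro x'
    simp only [hext]
    rw [dif_neg (by simp)]
    simp
  have hext_w : ∀ x' : S → ℝ, ext x' w = 0 := by
    intro x'
    simp only [hext]
    rw [dif_neg (by simp)]
    simp [hvw.symm]
  have hext_ker : ∀ x' : S → ℝ, A'.mulVec x' = 0 → A.mulVec (ext x') = 0 := by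
    intro x' hx'
    funext u
    by_cases huv : u = v
    · subst huv
      rw [hrowv, hext_w]; rfl
    by_cases huw : u = w
    · subst huw
      rw [hroww, hext_v]
      simp only [hext_val]
      simp
    · rw [hmv, hAuv u huw, hext_w]
      simp only [hext_val]
      have := congrFun hx' ⟨u, huv, huw⟩
      rw [hmv'] at this
      simp only [Pi.zero_apply] at this ⊢
      rw [this]; ring
  constructor
  · -- rank part
    -- restriction linear map between kernels
    have hker : ∀ x : Fin n → ℝ, A.mulVec x = 0 →
        A'.mulVec (fun j : S => x j.val) = 0 := by
      intro x hx
      have hxw : x w = 0 := by rw [← hrowv x, hx]; rfl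
      funext u
      rw [hmv']
      have := congrFun hx u.val
      rw [hmv, hAuv u.val u.2.2, hxw] at this
      simp only [Pi.zero_apply] at this ⊢
      linarith [this]
    set K := LinearMap.ker (A.mulVecLin)
    set K' := LinearMap.ker (A'.mulVecLin)
    have hmem : ∀ x : Fin n → ℝ, x ∈ K ↔ A.mulVec x = 0 := by
      intro x; rw [LinearMap.mem_ker]; rfl
    have hmem' : ∀ x' : S → ℝ, x' ∈ K' ↔ A'.mulVec x' = 0 := by
      intro x'; rw [LinearMap.mem_ker]; rfl
    let R : (Fin n → ℝ) →ₗ[ℝ] (S → ℝ) := LinearMap.funLeft ℝ ℝ Subtype.val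
    let Rk : K →ₗ[ℝ] K' :=
      LinearMap.codRestrict K' (R.comp K.subtype) (by
        rintro ⟨x, hx⟩
        rw [hmem']
        exact hker x ((hmem x).1 hx))
    have hbij : Function.Bijective Rk := by
      constructor
      · rintro ⟨x, hx⟩ ⟨y, hy⟩ hxy
        have hxy' : ∀ j : S, x j.val = y j.val := fun j =>
          congrFun (congrArg Subtype.val hxy) j
        have hx0 : A.mulVec x = 0 := (hmem x).1 hx
        have hy0 : A.mulVec y = 0 := (hmem y).1 hy
        have hxw : x w = y w := by
          have h1 : x w = 0 := by rw [← hrowv x, hx0]; rfl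
          have h2 : y w = 0 := by rw [← hrowv y, hy0]; rfl
          rw [h1, h2]
        have hxv : x v = y v := by
          have h1 := congrFun hx0 w
          have h2 := congrFun hy0 w
          rw [hroww] at h1 h2
          simp only [Pi.zero_apply] at h1 h2
          have hs : ∑ j : S, A w j.val * x j.val = ∑ j : S, A w j.val * y j.val :=
            Finset.sum_congr rfl (fun j _ => by rw [hxy' j])
          linarith [h1, h2]
        ext u
        by_cases huv : u = v
        · subst huv; exact hxv
        by_cases huw : u = w
        · subst huw; exact hxw
        · exact hxy' ⟨u, huv, huw⟩
      · rintro ⟨x', hx'⟩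
        have hx'0 : A'.mulVec x' = 0 := (hmem' x').1 hx'
        refine ⟨⟨ext x', (hmem _).2 (hext_ker x' hx'0)⟩, ?_⟩
        apply Subtype.ext
        funext j
        exact hext_val x' j
    have hfr : Module.finrank ℝ K = Module.finrank ℝ K' :=
      (LinearEquiv.ofBijective Rk hbij).finrank_eq
    have h1 : A.rank + Module.finrank ℝ K = n := by
      have := LinearMap.finrank_range_add_finrank_ker (A.mulVecLin)
      rw [Module.finrank_fintype_fun_eq_card, Fintype.card_fin] at this
      exact this
    have hcardS : Fintype.card S = n - 2 := by
      rw [Fintype.card_subtype]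
      have he : (Finset.univ.filter (fun u : Fin n => u ≠ v ∧ u ≠ w)) =
          Finset.univ \ {v, w} := by
        ext u; simp [not_or]
      rw [he, Finset.card_sdiff_of_subset (Finset.subset_univ _), Finset.card_pair hvw,
        Finset.card_univ, Fintype.card_fin]
    have h2 : A'.rank + Module.finrank ℝ K' = n - 2 := by
      have := LinearMap.finrank_range_add_finrank_ker (A'.mulVecLin)
      rw [Module.finrank_fintype_fun_eq_card, hcardS] at this
      exact this
    omega
  · -- kernel support part
    intro x' hx' u hu
    refine ⟨ext x', hext_ker x' hx', ?_⟩
    rw [hext_val x' u]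
    exact hu
end

section
/- Let A be an m × n real matrix with columns A_1, …, A_n, and for each i let H_i be the span of the columns {A_j : j ≠ i}. Let S = {i : A_i ∈ H_i}. Then there exists a vector y with supp(y) = S and Ay = 0. -/
open Finset

variable {m n : ℕ}

/-- If `y` is in the kernel and `y i ≠ 0`, column `i` is in the span of the other columns. -/
lemma ker_col_mem (A : Matrix (Fin m) (Fin n) ℝ) (y : Fin n → ℝ)
    (h : A.mulVec y = 0) (i : Fin n) (hi : y i ≠ 0) :
    (fun r => A r i) ∈
      Submodule.span ℝ {c : Fin m → ℝ | ∃ j, j ≠ i ∧ c = fun r => A r j} := by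
  have key : ∀ r, A r i = ∑ j ∈ univ.erase i, (-(y j / y i)) * A r j := by
    intro r
    have h1 : A r i * y i + ∑ j ∈ univ.erase i, A r j * y j = 0 := by
      have := congrFun h r
      simp only [Matrix.mulVec, dotProduct, Pi.zero_apply] at this
      rw [← Finset.add_sum_erase _ (fun j => A r j * y j) (mem_univ i)] at this
      exact this
    have h2 : ∑ j ∈ univ.erase i, A r j * y j = -(A r i * y i) := by linarith
    have h3 : ∑ j ∈ univ.erase i, (-(y j / y i)) * A r j
        = (-(1 / y i)) * ∑ j ∈ univ.erase i, A r j * y j := by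
      rw [Finset.mul_sum]
      exact Finset.sum_congr rfl fun j _ => by ring
    rw [h3, h2]
    field_simp
  have : (fun r => A r i)
      = ∑ j ∈ univ.erase i, (-(y j / y i)) • (fun r => A r j) := by
    funext r
    rw [Finset.sum_apply]
    simpa using key r
  rw [this]
  refine Submodule.sum_mem _ fun j hj => Submodule.smul_mem _ _ ?_
  exact Submodule.subset_span ⟨j, (Finset.mem_erase.1 hj).1, rfl⟩

/-- If column `i` is in the span of the others, there is a kernel vector nonzero at `i`. -/
lemma exists_ker_vec (A : Matrix (Fin m) (Fin n) ℝ) (i : Fin n)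
    (h : (fun r => A r i) ∈
      Submodule.span ℝ {c : Fin m → ℝ | ∃ j, j ≠ i ∧ c = fun r => A r j}) :
    ∃ z : Fin n → ℝ, A.mulVec z = 0 ∧ z i ≠ 0 := by
  have hset : {c : Fin m → ℝ | ∃ j, j ≠ i ∧ c = fun r => A r j}
      = (fun j => (fun r => A r j)) '' {j | j ≠ i} := by
    ext c; simp [Set.mem_image, eq_comm]
  rw [hset, Finsupp.mem_span_image_iff_linearCombination] at h
  obtain ⟨l, hl, hsum⟩ := h
  have hli : l i = 0 := by
    by_contra hne
    have := hl (Finsupp.mem_support_iff.2 hne)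
    simp at this
  refine ⟨fun j => if j = i then -1 else l j, ?_, by simp⟩
  funext r
  have hsr : ∑ j, l j * A r j = A r i := by
    have := congrFun hsum r
    rw [Finsupp.linearCombination_apply] at this
    have hfin : (l.sum fun j c => c • (fun r => A r j)) r
        = ∑ j ∈ l.support, l j * A r j := by
      rw [Finsupp.sum, Finset.sum_apply]
      rfl
    rw [hfin] at this
    rw [← this]
    exact (Finset.sum_subset (Finset.subset_univ _) (by
      intro j _ hj
      simp [Finsupp.notMem_support_iff.1 hj])).symm
  simp only [Matrix.mulVec, dotProduct, Pi.zero_apply]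
  rw [← Finset.add_sum_erase _ (fun j => A r j * (if j = i then -1 else l j)) (mem_univ i)]
  have : ∑ j ∈ univ.erase i, A r j * (if j = i then -1 else l j)
      = ∑ j ∈ univ.erase i, l j * A r j := by
    refine Finset.sum_congr rfl fun j hj => ?_
    rw [if_neg (Finset.mem_erase.1 hj).1]; ring
  rw [this]
  have h2 : ∑ j ∈ univ.erase i, l j * A r j = ∑ j, l j * A r j := by
    rw [← Finset.add_sum_erase _ (fun j => l j * A r j) (mem_univ i), hli]
    ring
  rw [h2, hsr]; simp

/-- Combine two kernel vectors to get one supported on the union of supports. -/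
lemma combine (A : Matrix (Fin m) (Fin n) ℝ) (y z : Fin n → ℝ)
    (hy : A.mulVec y = 0) (hz : A.mulVec z = 0) :
    ∃ w : Fin n → ℝ, A.mulVec w = 0 ∧ ∀ j, w j ≠ 0 ↔ (y j ≠ 0 ∨ z j ≠ 0) := by
  obtain ⟨c, hc⟩ := Infinite.exists_notMem_finset
    ((univ.filter (fun j => z j ≠ 0)).image (fun j => -(y j) / z j))
  refine ⟨y + c • z, ?_, ?_⟩
  · rw [Matrix.mulVec_add, Matrix.mulVec_smul, hy, hz]; simp
  · intro j
    by_cases hzj : z j = 0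
    · simp [hzj]
    · have hne : y j + c * z j ≠ 0 := by
        intro h0
        apply hc
        refine Finset.mem_image.2 ⟨j, Finset.mem_filter.2 ⟨mem_univ j, hzj⟩, ?_⟩
        field_simp
        linarith
      simp only [Pi.add_apply, Pi.smul_apply, smul_eq_mul]
      exact ⟨fun _ => Or.inr hzj, fun _ => hne⟩

lemma build (A : Matrix (Fin m) (Fin n) ℝ) (s : Finset (Fin n)) :
    ∃ y : Fin n → ℝ, A.mulVec y = 0 ∧ ∀ i ∈ s,
      (fun r => A r i) ∈
        Submodule.span ℝ {c : Fin m → ℝ | ∃ j, j ≠ i ∧ c = fun r => A r j} → y i ≠ 0 := by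
  induction s using Finset.induction_on with
  | empty => exact ⟨0, by simp [Matrix.mulVec_zero], by simp⟩
  | @insert a s ha ih =>
    obtain ⟨y, hy0, hy⟩ := ih
    by_cases hP : (fun r => A r a) ∈
        Submodule.span ℝ {c : Fin m → ℝ | ∃ j, j ≠ a ∧ c = fun r => A r j}
    · obtain ⟨z, hz0, hza⟩ := exists_ker_vec A a hP
      obtain ⟨w, hw0, hw⟩ := combine A y z hy0 hz0
      refine ⟨w, hw0, fun i hi hPi => ?_⟩
      rcases Finset.mem_insert.1 hi with rfl | hi
      · exact (hw i).2 (Or.inr hza)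
      · exact (hw i).2 (Or.inl (hy i hi hPi))
    · refine ⟨y, hy0, fun i hi hPi => ?_⟩
      rcases Finset.mem_insert.1 hi with rfl | hi
      · exact absurd hPi hP
      · exact hy i hi hPi

/-- Let `S` be the set of indices `i` such that column `A_i` lies in the span of the remaining
columns. Then there is a vector `y` with support exactly `S` and `A y = 0`. -/
theorem stmt10 {m n : ℕ} (A : Matrix (Fin m) (Fin n) ℝ) :
    ∃ y : Fin n → ℝ, A.mulVec y = 0 ∧
      ∀ i, y i ≠ 0 ↔
        (fun r => A r i) ∈
          Submodule.span ℝ {c : Fin m → ℝ | ∃ j, j ≠ i ∧ c = fun r => A r j} := by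
  obtain ⟨y, hy0, hy⟩ := build A Finset.univ
  exact ⟨y, hy0, fun i => ⟨ker_col_mem A y hy0 i, hy i (mem_univ i)⟩⟩
end

section
/- Let A be an m × n real matrix with columns A_1, …, A_n, and for each i let H_i be the span of the other columns {A_j : j ≠ i}. Then the standard basis vector e_i ∈ ℝ^n lies in the row span of A (i.e., e_i ∈ Span(A^T)) if and only if A_i ∉ H_i. -/
/-- The standard basis vector `e_i` lies in the row span of `A` if and only if column `A_i`
does not lie in the span of the remaining columns. -/
theorem stmt11 {m n : ℕ} (A : Matrix (Fin m) (Fin n) ℝ) (i : Fin n) :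
    (Pi.single i 1 : Fin n → ℝ) ∈ Submodule.span ℝ (Set.range A) ↔
      (fun r => A r i) ∉
        Submodule.span ℝ {c : Fin m → ℝ | ∃ j, j ≠ i ∧ c = fun r => A r j} := by
  classical
  set H : Submodule ℝ (Fin m → ℝ) :=
    Submodule.span ℝ {c : Fin m → ℝ | ∃ j, j ≠ i ∧ c = fun r => A r j} with hH
  constructor
  · intro h hmem
    rw [show Set.range A = Set.range A.row from rfl, ← range_vecMulLinear] at h
    obtain ⟨y, hy⟩ := h
    let f : (Fin m → ℝ) →ₗ[ℝ] ℝ :=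
      { toFun := fun c => dotProduct y c
        map_add' := fun a b => dotProduct_add y a b
        map_smul' := fun r a => dotProduct_smul r y a }
    have hker : H ≤ LinearMap.ker f := by
      rw [hH, Submodule.span_le]
      rintro c ⟨j, hj, rfl⟩
      have h2 : f (fun r => A r j) = A.vecMulLinear y j := rfl
      simp only [SetLike.mem_coe, LinearMap.mem_ker, h2, hy]
      simp [Pi.single_apply, hj]
    have h0 : f (fun r => A r i) = 0 := hker hmem
    have h1 : f (fun r => A r i) = 1 := by
      have h2 : f (fun r => A r i) = A.vecMulLinear y i := rfl
      simp [h2, hy]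
    rw [h0] at h1
    exact zero_ne_one h1
  · intro hA
    obtain ⟨f, hf0, hfH⟩ := H.exists_dual_map_eq_bot_of_notMem hA inferInstance
    rw [show Set.range A = Set.range A.row from rfl, ← range_vecMulLinear]
    refine ⟨fun r => (f (fun r => A r i))⁻¹ * f (fun j' => if r = j' then 1 else 0), ?_⟩
    have hker : H ≤ LinearMap.ker f := by
      intro x hx
      have hx' : f x ∈ Submodule.map f H := ⟨x, hx, rfl⟩
      rw [hfH] at hx'
      simpa using hx'
    have hcol : ∀ j : Fin n, f (fun r => A r j) =
        ∑ r : Fin m, A r j • f (fun j' => if r = j' then 1 else 0) :=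
      fun j => LinearMap.pi_apply_eq_sum_univ f (fun r => A r j)
    ext j
    rw [Matrix.vecMulLinear_apply]
    simp only [Matrix.vecMul, dotProduct]
    rcases eq_or_ne j i with rfl | hj
    · have : ∑ r : Fin m, (f (fun r => A r j))⁻¹ * f (fun j' => if r = j' then 1 else 0) * A r j
          = (f (fun r => A r j))⁻¹ * f (fun r => A r j) := by
        rw [hcol j, Finset.mul_sum]
        apply Finset.sum_congr rfl
        intro r _
        ring_nf
      rw [this, inv_mul_cancel₀ hf0]
      simp
    · have hmem : (fun r => A r j) ∈ H :=
        Submodule.subset_span ⟨j, hj, rfl⟩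
      have hz : f (fun r => A r j) = 0 := hker hmem
      have : ∑ r : Fin m, (f (fun r => A r i))⁻¹ * f (fun j' => if r = j' then 1 else 0) * A r j
          = (f (fun r => A r i))⁻¹ * f (fun r => A r j) := by
        rw [hcol j, Finset.mul_sum]
        apply Finset.sum_congr rfl
        intro r _
        ring_nf
      rw [this, hz, mul_zero]
      simp [Pi.single_apply, hj]
end

section
/- Let A ∈ ℝ^{m×n}, let D = ⋃_{x : Ax = 0} supp(x) be the set of column indices involved in some kernel vector, and let i ∈ [n] \ D. Then e_i lies in the row span of A. Consequently, the indicator vector of [n] \ D lies in the row span of A, and hence min_w |A^T w − 𝟙|_2^2 ≤ |D| (where 𝟙 ∈ ℝ^n is the all-ones vector). -/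
open Classical in
lemma stmt12_aux {m n : ℕ} (A : Matrix (Fin m) (Fin n) ℝ) (i : Fin n)
    (hi : ∀ x : Fin n → ℝ, A.mulVec x = 0 → x i = 0) :
    (Pi.single i 1 : Fin n → ℝ) ∈ Submodule.span ℝ (Set.range A) := by
  let v : Fin m → EuclideanSpace ℝ (Fin n) := fun j => WithLp.toLp 2 (A j)
  have h1 : (EuclideanSpace.single i 1 : EuclideanSpace ℝ (Fin n)) ∈
      Submodule.span ℝ (Set.range v) := by
    rw [← Submodule.orthogonal_orthogonal (Submodule.span ℝ (Set.range v)),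
      Submodule.mem_orthogonal]
    intro u hu
    have hrow : ∀ j, (inner ℝ u (v j) : ℝ) = 0 := fun j =>
      (Submodule.mem_orthogonal' _ _).mp hu (v j) (Submodule.subset_span ⟨j, rfl⟩)
    have hker : A.mulVec u = 0 := by
      funext j
      have h := hrow j
      rw [PiLp.inner_apply] at h
      simpa [Matrix.mulVec, dotProduct, v, mul_comm] using h
    have hui : u i = 0 := hi u hker
    rw [PiLp.inner_apply]
    simp [EuclideanSpace.single_apply, hui]
  have h2 := Submodule.mem_map_of_mem (f := (WithLp.linearEquiv 2 ℝ (Fin n → ℝ)).toLinearMap) h1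
  rw [← Submodule.span_image, ← Set.range_comp] at h2
  convert h2 using 1
  · rfl
  · ext k; simp [EuclideanSpace.single_apply, Pi.single_apply]

open Classical in
/-- Let `D` be the set of column indices involved in some kernel vector of `A`. Then for every
`i ∉ D` the basis vector `e_i` lies in the row span of `A`; the indicator vector of the
complement of `D` lies in the row span of `A`; and consequently
`min_w |Aᵀ w - 𝟙|² ≤ |D|`. -/
theorem stmt12 {m n : ℕ} (A : Matrix (Fin m) (Fin n) ℝ) :
    (∀ i : Fin n, i ∉ {j : Fin n | ∃ x, A.mulVec x = 0 ∧ x j ≠ 0} →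
        (Pi.single i 1 : Fin n → ℝ) ∈ Submodule.span ℝ (Set.range A)) ∧
    ((fun j : Fin n => if ∃ x, A.mulVec x = 0 ∧ x j ≠ 0 then (0 : ℝ) else 1) ∈
        Submodule.span ℝ (Set.range A)) ∧
    ∃ w : Fin m → ℝ, ∑ j, (A.transpose.mulVec w j - 1) ^ 2 ≤
        (Set.ncard {j : Fin n | ∃ x, A.mulVec x = 0 ∧ x j ≠ 0} : ℝ) := by
  set P : Fin n → Prop := fun j => ∃ x, A.mulVec x = 0 ∧ x j ≠ 0 with hP
  have part1 : ∀ i : Fin n, ¬ P i →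
      (Pi.single i 1 : Fin n → ℝ) ∈ Submodule.span ℝ (Set.range A) := by
    intro i hi
    apply stmt12_aux
    intro x hx
    by_contra h
    exact hi ⟨x, hx, h⟩
  have hf : (fun j : Fin n => if P j then (0 : ℝ) else 1) =
      ∑ i : Fin n, if P i then (0 : Fin n → ℝ) else Pi.single i 1 := by
    funext j
    rw [Finset.sum_apply, Finset.sum_eq_single j]
    · by_cases h : P j <;> simp [h]
    · intro i _ hij
      by_cases h : P i <;> simp [h, Pi.single_apply, Ne.symm hij]
    · simp
  have part2 : (fun j : Fin n => if P j then (0 : ℝ) else 1) ∈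
      Submodule.span ℝ (Set.range A) := by
    rw [hf]
    apply Submodule.sum_mem
    intro i _
    by_cases h : P i
    · simp [h]
    · simpa [h] using part1 i h
  refine ⟨part1, part2, ?_⟩
  have hmem := part2
  rw [show Set.range A = Set.range A.row from rfl, ← range_vecMulLinear] at hmem
  obtain ⟨w, hw⟩ := hmem
  refine ⟨w, le_of_eq ?_⟩
  have hval : ∀ j, A.transpose.mulVec w j = if P j then (0 : ℝ) else 1 := by
    intro j
    rw [Matrix.mulVec_transpose]
    exact congrFun hw j
  have hsum : ∑ j, (A.transpose.mulVec w j - 1) ^ 2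
      = ∑ j, (if P j then (1 : ℝ) else 0) := by
    apply Finset.sum_congr rfl
    intro j _
    rw [hval j]
    by_cases h : P j <;> simp [h]
  rw [hsum, Finset.sum_boole]
  congr 1
  rw [Set.ncard_eq_toFinset_card']
  simp [hP]
end

section
/- Let v ∈ ℝ^N be an arbitrary vector and let a be its most common entry (an element of ℝ attaining the maximal number of occurrences among the coordinates of v). Let d ≤ √(N/2) and let x be sampled uniformly from the set of {0,1}-vectors of length N with exactly d ones. Then for every w ∈ ℝ with w ≠ d·a, Pr[x · v = w] ≤ 1/2 + d²/N. -/
open Finset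

namespace Stmt13Aux

variable {N : ℕ}

/-- number of coordinates of `v` equal to `b` -/
noncomputable def cnt (v : Fin N → ℝ) (b : ℝ) : ℕ := (Finset.univ.filter (fun i => v i = b)).card

/-- the sets of size `j` whose `v`-sum is `c` -/
noncomputable def Bd (v : Fin N → ℝ) (j : ℕ) (c : ℝ) : Finset (Finset (Fin N)) :=
  (Finset.powersetCard j (Finset.univ : Finset (Fin N))).filter
    (fun S : Finset (Fin N) => ∑ i ∈ S, v i = c)

lemma Bd_card_le (v : Fin N → ℝ) (j : ℕ) (c : ℝ) : (Bd v j c).card ≤ N.choose j := by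
  have h := Finset.card_filter_le (Finset.powersetCard j (Finset.univ : Finset (Fin N)))
      (fun S : Finset (Fin N) => ∑ i ∈ S, v i = c)
  rwa [Finset.card_powersetCard, Finset.card_univ, Fintype.card_fin] at h

lemma reveal (v : Fin N → ℝ) (j : ℕ) (c : ℝ) :
    (j+1) * (Bd v (j+1) c).card ≤
      ∑ S ∈ Finset.powersetCard j (Finset.univ : Finset (Fin N)),
        cnt v (c - ∑ i ∈ S, v i) := by
  classical
  have h1 : ((Bd v (j+1) c).sigma (fun S => (S : Finset (Fin N)))).card
      = (j+1) * (Bd v (j+1) c).card := by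
    rw [Finset.card_sigma]
    have he : ∑ S ∈ Bd v (j+1) c, (S : Finset (Fin N)).card = ∑ _S ∈ Bd v (j+1) c, (j+1) :=
      Finset.sum_congr rfl (fun S hS => (Finset.mem_powersetCard.mp (Finset.mem_filter.mp hS).1).2)
    rw [he, Finset.sum_const, smul_eq_mul, mul_comm]
  have h2 : ∑ S ∈ Finset.powersetCard j (Finset.univ : Finset (Fin N)),
        cnt v (c - ∑ i ∈ S, v i)
      = ((Finset.powersetCard j (Finset.univ : Finset (Fin N))).sigma
          (fun S => Finset.univ.filter (fun i => v i = c - ∑ x ∈ S, v x))).card := by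
    rw [Finset.card_sigma]; rfl
  rw [← h1, h2]
  apply Finset.card_le_card_of_injOn
    (fun p : (_ : Finset (Fin N)) × Fin N => (⟨p.1.erase p.2, p.2⟩ : (_ : Finset (Fin N)) × Fin N))
  · rintro ⟨S, i⟩ hp
    rw [Finset.mem_coe, Finset.mem_sigma] at hp
    obtain ⟨hS, hiS⟩ := hp
    have hSmem := Finset.mem_filter.mp hS
    have hcard := (Finset.mem_powersetCard.mp hSmem.1).2
    rw [Finset.mem_coe, Finset.mem_sigma]
    constructor
    · exact Finset.mem_powersetCard.mpr ⟨Finset.subset_univ _, by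
        simp [Finset.card_erase_of_mem hiS, hcard]⟩

    · refine Finset.mem_filter.mpr ⟨Finset.mem_univ _, ?_⟩
      have hadd := Finset.add_sum_erase S v hiS
      have hsum := hSmem.2
      linarith
  · rintro ⟨S, i⟩ hS ⟨T, l⟩ hT hEq
    have hiS : i ∈ S := (Finset.mem_sigma.mp (Finset.mem_coe.mp hS)).2
    have hlT : l ∈ T := (Finset.mem_sigma.mp (Finset.mem_coe.mp hT)).2
    obtain ⟨hE, hil⟩ := Sigma.mk.inj_iff.mp hEq
    have hil' : i = l := heq_iff_eq.mp hil
    subst hil'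
    have hST : S = T := by
      have h := congrArg (insert i) hE
      rwa [Finset.insert_erase hiS, Finset.insert_erase hlT] at h
    subst hST
    rfl

lemma fiber (i : Fin N) (j : ℕ) :
    ((Finset.powersetCard (j+1) (Finset.univ : Finset (Fin N))).filter
      (fun S => i ∈ S)).card = (N-1).choose j := by
  classical
  have h : ((Finset.powersetCard (j+1) (Finset.univ : Finset (Fin N))).filter
        (fun S => i ∈ S)).card
      = (Finset.powersetCard j ((Finset.univ : Finset (Fin N)).erase i)).card := by
    refine Finset.card_bij' (fun S _ => S.erase i) (fun T _ => insert i T) ?hi ?hj ?left ?right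
    case hi =>
      intro S hS
      have h := Finset.mem_filter.mp hS
      have hc := (Finset.mem_powersetCard.mp h.1).2
      exact Finset.mem_powersetCard.mpr ⟨Finset.erase_subset_erase _ (Finset.subset_univ S),
        by simp [Finset.card_erase_of_mem h.2, hc]⟩
    case hj =>
      intro T hT
      have h := Finset.mem_powersetCard.mp hT
      have hiT : i ∉ T := fun hi => (Finset.mem_erase.mp (h.1 hi)).1 rfl
      refine Finset.mem_filter.mpr ⟨Finset.mem_powersetCard.mpr ⟨Finset.subset_univ _, ?_⟩,
        Finset.mem_insert_self _ _⟩
      rw [Finset.card_insert_of_notMem hiT, h.2]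
    case left =>
      intro S hS; exact Finset.insert_erase (Finset.mem_filter.mp hS).2
    case right =>
      intro T hT
      have h := Finset.mem_powersetCard.mp hT
      have hiT : i ∉ T := fun hi => (Finset.mem_erase.mp (h.1 hi)).1 rfl
      exact Finset.erase_insert hiT
  rw [h, Finset.card_powersetCard, Finset.card_erase_of_mem (Finset.mem_univ i),
    Finset.card_univ, Fintype.card_fin]

lemma union_bound (v : Fin N → ℝ) (hN : 0 < N) (a : ℝ) (j : ℕ) (c : ℝ)
    (hc : c ≠ ((j:ℝ)+1) * a) :
    (Bd v (j+1) c).card ≤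
      (Finset.univ.filter (fun i => v i ≠ a)).card * (N-1).choose j := by
  classical
  have htarget : ((Finset.univ.filter (fun i => v i ≠ a)).sigma
      (fun i => (Finset.powersetCard (j+1) (Finset.univ : Finset (Fin N))).filter
        (fun S => i ∈ S))).card
      = (Finset.univ.filter (fun i => v i ≠ a)).card * (N-1).choose j := by
    rw [Finset.card_sigma, Finset.sum_congr rfl (fun i _ => fiber i j), Finset.sum_const,
      smul_eq_mul]
  rw [← htarget]
  have hpick : ∀ S ∈ Bd v (j+1) c, (S.filter (fun i => v i ≠ a)).Nonempty := by
    intro S hS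
    by_contra hne
    rw [Finset.not_nonempty_iff_eq_empty, Finset.filter_eq_empty_iff] at hne
    have h := Finset.mem_filter.mp hS
    have hall : ∀ i ∈ S, v i = a := fun i hi => not_not.mp (hne hi)
    have hsum : ∑ i ∈ S, v i = ((j:ℝ)+1) * a := by
      rw [Finset.sum_congr rfl hall, Finset.sum_const,
        (Finset.mem_powersetCard.mp h.1).2, nsmul_eq_mul]
      push_cast; ring
    exact hc (by rw [← h.2, hsum])
  set f : Finset (Fin N) → ((_ : Fin N) × Finset (Fin N)) := fun S =>
    if h : (S.filter (fun i => v i ≠ a)).Nonempty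
    then ⟨(S.filter (fun i => v i ≠ a)).min' h, S⟩
    else ⟨⟨0, hN⟩, S⟩ with hf
  have hsnd : ∀ S, (f S).2 = S := by
    intro S
    by_cases h : (S.filter (fun i => v i ≠ a)).Nonempty <;> simp [hf, h]
  apply Finset.card_le_card_of_injOn f
  · intro S hS
    have hne := hpick S hS
    have hmin := Finset.min'_mem _ hne
    rw [Finset.mem_filter] at hmin
    rw [Finset.mem_coe, Finset.mem_sigma]
    simp only [hf, dif_pos hne]
    constructor
    · exact Finset.mem_filter.mpr ⟨Finset.mem_univ _, hmin.2⟩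
    · exact Finset.mem_filter.mpr ⟨(Finset.mem_filter.mp (Finset.mem_coe.mp hS)).1, hmin.1⟩
  · intro S _ T _ hEq
    have := congrArg (fun p : ((_ : Fin N) × Finset (Fin N)) => p.2) hEq
    simpa [hsnd] using this

lemma step_bound (v : Fin N → ℝ) (a c : ℝ) (j : ℕ) (m k : ℕ)
    (hma : cnt v a ≤ m) (hk : ∀ b, b ≠ a → cnt v b ≤ k) :
    ∑ S ∈ Finset.powersetCard j (Finset.univ : Finset (Fin N)),
        cnt v (c + a - ∑ i ∈ S, v i)
      ≤ m * (Bd v j c).card + k * (N.choose j - (Bd v j c).card) := by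
  classical
  rw [← Finset.sum_filter_add_sum_filter_not (Finset.powersetCard j (Finset.univ : Finset (Fin N)))
        (fun S : Finset (Fin N) => ∑ i ∈ S, v i = c)]
  have h1 : ∑ S ∈ (Finset.powersetCard j (Finset.univ : Finset (Fin N))).filter
        (fun S : Finset (Fin N) => ∑ i ∈ S, v i = c), cnt v (c + a - ∑ i ∈ S, v i)
      ≤ (Bd v j c).card * m := by
    have : ∀ S ∈ (Finset.powersetCard j (Finset.univ : Finset (Fin N))).filter
        (fun S : Finset (Fin N) => ∑ i ∈ S, v i = c), cnt v (c + a - ∑ i ∈ S, v i) ≤ m := by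
      intro S hS
      have hs := (Finset.mem_filter.mp hS).2
      have : c + a - ∑ i ∈ S, v i = a := by rw [hs]; ring
      rw [this]; exact hma
    calc ∑ S ∈ _, cnt v (c + a - ∑ i ∈ S, v i) ≤ _ • m := Finset.sum_le_card_nsmul _ _ m this
      _ = (Bd v j c).card * m := by rw [smul_eq_mul]; rfl
  have h2 : ∑ S ∈ (Finset.powersetCard j (Finset.univ : Finset (Fin N))).filter
        (fun S : Finset (Fin N) => ¬ (∑ i ∈ S, v i = c)), cnt v (c + a - ∑ i ∈ S, v i)
      ≤ (N.choose j - (Bd v j c).card) * k := by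
    have hb : ∀ S ∈ (Finset.powersetCard j (Finset.univ : Finset (Fin N))).filter
        (fun S : Finset (Fin N) => ¬ (∑ i ∈ S, v i = c)), cnt v (c + a - ∑ i ∈ S, v i) ≤ k := by
      intro S hS
      have hs := (Finset.mem_filter.mp hS).2
      refine hk _ (fun hEq => hs ?_)
      have : ∑ i ∈ S, v i = c := by linarith [hEq]
      exact this
    have hcard : ((Finset.powersetCard j (Finset.univ : Finset (Fin N))).filter
        (fun S : Finset (Fin N) => ¬ (∑ i ∈ S, v i = c))).card
        = N.choose j - (Bd v j c).card := by
      have h := Finset.card_filter_add_card_filter_not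
        (s := Finset.powersetCard j (Finset.univ : Finset (Fin N)))
        (fun S : Finset (Fin N) => ∑ i ∈ S, v i = c)
      rw [Finset.card_powersetCard, Finset.card_univ, Fintype.card_fin] at h
      have hBd : ((Finset.powersetCard j (Finset.univ : Finset (Fin N))).filter
        (fun S : Finset (Fin N) => ∑ i ∈ S, v i = c)).card = (Bd v j c).card := rfl
      omega
    calc ∑ S ∈ _, cnt v (c + a - ∑ i ∈ S, v i) ≤ _ • k := Finset.sum_le_card_nsmul _ _ k hb
      _ = (N.choose j - (Bd v j c).card) * k := by rw [smul_eq_mul, hcard]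
  calc _ ≤ (Bd v j c).card * m + (N.choose j - (Bd v j c).card) * k := Nat.add_le_add h1 h2
    _ = m * (Bd v j c).card + k * (N.choose j - (Bd v j c).card) := by ring


lemma arith_step {jR e m k N L Pj Pj1 Cj Cj1 : ℝ}
    (hj : jR ≤ e) (hj0 : 0 ≤ jR)
    (h' : (jR+1) * Pj1 ≤ m * Pj + k * (Cj - Pj))
    (hih : Pj ≤ L * Cj)
    (hidj : Cj1 * (jR+1) = Cj * (N - jR))
    (hL0 : 0 ≤ L)
    (hLk : L * (2*k - (e+1) + 1) = k)
    (hkm : k ≤ m)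
    (hmkN : m + k = N)
    (hCj0 : 0 ≤ Cj) :
    Pj1 ≤ L * Cj1 := by
  have hkey2 : k + (m - k) * L ≤ L * (N - jR) := by
    have hmono : L * (2*k - (e+1) + 1) ≤ L * (2*k - jR) :=
      mul_le_mul_of_nonneg_left (by linarith) hL0
    nlinarith [hLk, hmono]
  have hB' : (m - k) * Pj ≤ (m - k) * (L * Cj) :=
    mul_le_mul_of_nonneg_left hih (by linarith)
  have hC' : Cj * (k + (m - k) * L) ≤ Cj * (L * (N - jR)) :=
    mul_le_mul_of_nonneg_left hkey2 hCj0
  have hE : L * (Cj1 * (jR+1)) = L * (Cj * (N - jR)) := by rw [hidj]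
  have hchain : (jR+1) * Pj1 ≤ (jR+1) * (L * Cj1) := by nlinarith [h', hB', hC', hE]
  exact le_of_mul_le_mul_left hchain (by linarith)

end Stmt13Aux
set_option maxHeartbeats 1000000 in
/-- Anti-concentration for sparse regular vectors: if `a` is a most common entry of
`v ∈ ℝ^N`, `d ≤ √(N/2)`, and `x` is a uniformly random {0,1}-vector with exactly `d` ones
(encoded as a uniformly random `d`-subset `S`, with `x · v = ∑_{i ∈ S} v i`), then for every
`w ≠ d·a` the probability that `x · v = w` is at most `1/2 + d²/N`. -/
theorem stmt13 {N d : ℕ} (v : Fin N → ℝ) (a : ℝ)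
    (ha : ∀ b : ℝ, Set.ncard {i | v i = b} ≤ Set.ncard {i | v i = a})
    (hd : (d : ℝ) ≤ Real.sqrt (N / 2))
    (w : ℝ) (hw : w ≠ d * a) :
    (((Finset.powersetCard d (Finset.univ : Finset (Fin N))).filter
        (fun S : Finset (Fin N) => ∑ i ∈ S, v i = w)).card : ℝ) /
      ((Finset.powersetCard d (Finset.univ : Finset (Fin N))).card : ℝ)
      ≤ 1 / 2 + (d : ℝ) ^ 2 / N := by
  have hnum : ((Finset.powersetCard d (Finset.univ : Finset (Fin N))).filter
        (fun S : Finset (Fin N) => ∑ i ∈ S, v i = w)) = Stmt13Aux.Bd v d w := rfl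
  rw [hnum, Finset.card_powersetCard, Finset.card_univ, Fintype.card_fin]
  rcases Nat.eq_zero_or_pos d with hd0 | hd1
  · subst hd0
    have h0 : Stmt13Aux.Bd v 0 w = ∅ := by
      rw [Finset.eq_empty_iff_forall_notMem]
      intro S hS
      have h := Finset.mem_filter.mp hS
      have hS0 : S = ∅ := Finset.card_eq_zero.mp (Finset.mem_powersetCard.mp h.1).2
      subst hS0
      apply hw
      have h2 := h.2
      simp only [Finset.sum_empty] at h2
      rw [← h2]
      simp
    rw [h0]
    simp only [Finset.card_empty, Nat.cast_zero, Nat.choose_zero_right, Nat.cast_one,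
      zero_div, CharP.cast_eq_zero]
    positivity
  -- main case d ≥ 1
  have hsq : (d:ℝ)^2 ≤ (N:ℝ)/2 := (Real.le_sqrt (by positivity) (by positivity)).mp hd
  have hd2 : 2 * d^2 ≤ N := by
    have h : ((2 * d^2 : ℕ) : ℝ) ≤ (N:ℝ) := by push_cast; linarith
    exact_mod_cast h
  have hdN : d ≤ N := by nlinarith
  have hN1 : 0 < N := lt_of_lt_of_le hd1 hdN
  obtain ⟨e, rfl⟩ : ∃ e, d = e + 1 := ⟨d - 1, by omega⟩
  set m := Stmt13Aux.cnt v a with hm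
  have hcntle : ∀ b : ℝ, Stmt13Aux.cnt v b ≤ m := by
    intro b
    have h1 : {i | v i = b}
        = ((Finset.univ.filter (fun i => v i = b) : Finset (Fin N)) : Set (Fin N)) := by
      ext i; simp
    have h2 : {i | v i = a}
        = ((Finset.univ.filter (fun i => v i = a) : Finset (Fin N)) : Set (Fin N)) := by
      ext i; simp
    have h3 := ha b
    rwa [h1, h2, Set.ncard_coe_finset, Set.ncard_coe_finset] at h3
  have hmN : m ≤ N := by
    have h := Finset.card_filter_le (Finset.univ : Finset (Fin N)) (fun i => v i = a)
    rw [Finset.card_univ, Fintype.card_fin] at h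
    exact h
  set k := N - m with hkdef
  have hkcard : (Finset.univ.filter (fun i => v i ≠ a)).card = k := by
    have h := Finset.card_filter_add_card_filter_not
      (s := (Finset.univ : Finset (Fin N))) (fun i => v i = a)
    rw [Finset.card_univ, Fintype.card_fin] at h
    have hmm : (Finset.univ.filter (fun i => v i = a)).card = m := rfl
    have hconv : (Finset.univ.filter (fun i => v i ≠ a)).card
        = (Finset.univ.filter (fun i => ¬ v i = a)).card := by
      simp only [ne_eq]
    omega
  have hcntk : ∀ b : ℝ, b ≠ a → Stmt13Aux.cnt v b ≤ k := by
    intro b hb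
    rw [← hkcard]
    apply Finset.card_le_card
    intro i hi
    rw [Finset.mem_filter] at hi ⊢
    exact ⟨hi.1, by rw [hi.2]; exact hb⟩
  -- real facts
  have hNR0 : (0:ℝ) < (N:ℝ) := by exact_mod_cast hN1
  set P : ℝ := ((Stmt13Aux.Bd v (e+1) w).card : ℝ) with hP
  set Cd : ℝ := (N.choose (e+1) : ℝ) with hCd
  set Ce : ℝ := (N.choose e : ℝ) with hCe
  have hCd0 : (0:ℝ) < Cd := by rw [hCd]; exact_mod_cast Nat.choose_pos hdN
  have hCe0 : (0:ℝ) < Ce := by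
    rw [hCe]; exact_mod_cast Nat.choose_pos (le_trans (Nat.le_succ e) hdN)
  have heN : (e:ℝ) + 1 ≤ (N:ℝ) := by exact_mod_cast hdN
  have hNe : (0:ℝ) < (N:ℝ) - e := by linarith
  have hd2R : 2*((e:ℝ)+1)^2 ≤ (N:ℝ) := by
    have h : ((2*(e+1)^2 : ℕ):ℝ) ≤ (N:ℝ) := by exact_mod_cast hd2
    push_cast at h; linarith
  have hchooseid : ∀ j : ℕ, j < N →
      (N.choose (j+1) : ℝ) * ((j:ℝ)+1) = (N.choose j : ℝ) * ((N:ℝ) - (j:ℝ)) := by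
    intro j hj
    have h := Nat.choose_succ_right_eq N j
    have h2 : ((N.choose (j+1) : ℝ)) * ((j:ℝ)+1) = (N.choose j : ℝ) * ((N - j : ℕ) : ℝ) := by
      exact_mod_cast h
    rw [Nat.cast_sub hj.le] at h2
    exact h2
  have hid : Cd * ((e:ℝ)+1) = Ce * ((N:ℝ) - (e:ℝ)) := hchooseid e (by omega)
  -- reduce to the cross-multiplied statement
  suffices hfin : P * (2*(N:ℝ)) ≤ ((N:ℝ) + 2*((e:ℝ)+1)^2) * Cd by
    rw [div_le_iff₀ hCd0]
    have h2N : (0:ℝ) < 2*(N:ℝ) := by positivity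
    refine le_of_mul_le_mul_right ?_ h2N
    have hNne : (N:ℝ) ≠ 0 := ne_of_gt hNR0
    have hx : ((e:ℝ)+1)^2 / (N:ℝ) * (N:ℝ) = ((e:ℝ)+1)^2 := div_mul_cancel₀ _ hNne
    have heq2 : ((1 / 2 + ((e+1 : ℕ) : ℝ) ^ 2 / (N:ℝ)) * Cd) * (2*(N:ℝ))
        = ((N:ℝ) + 2*((e:ℝ)+1)^2) * Cd := by
      push_cast
      linear_combination (2*Cd) * hx
    rw [heq2]
    exact hfin
  have hP0 : (0:ℝ) ≤ P := by rw [hP]; exact Nat.cast_nonneg _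
  rcases le_or_gt (2*m) N with hA | hB
  · -- Case A : m ≤ N/2, bound (e+1)*P ≤ m*C(N,e)
    have hrev := Stmt13Aux.reveal v e w
    have hsum : ∑ S ∈ Finset.powersetCard e (Finset.univ : Finset (Fin N)),
        Stmt13Aux.cnt v (w - ∑ i ∈ S, v i) ≤ N.choose e * m := by
      calc ∑ S ∈ Finset.powersetCard e (Finset.univ : Finset (Fin N)),
            Stmt13Aux.cnt v (w - ∑ i ∈ S, v i)
          ≤ (Finset.powersetCard e (Finset.univ : Finset (Fin N))).card • m :=
            Finset.sum_le_card_nsmul _ _ m (fun S _ => hcntle _)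
        _ = N.choose e * m := by
            rw [smul_eq_mul, Finset.card_powersetCard, Finset.card_univ, Fintype.card_fin]
    have h1 : ((e:ℝ)+1) * P ≤ Ce * (m:ℝ) := by
      rw [hP, hCe]
      exact_mod_cast le_trans hrev hsum
    have hmR : 2*(m:ℝ) ≤ (N:ℝ) := by exact_mod_cast hA
    have s1 : (e:ℝ) + 1 ≤ ((e:ℝ)+1)^2 := by nlinarith [Nat.cast_nonneg (α := ℝ) e]
    have s2 : (N:ℝ)/2 ≤ (N:ℝ) - e := by linarith
    have hkey : 2*(N:ℝ)*(m:ℝ) ≤ ((N:ℝ) + 2*((e:ℝ)+1)^2) * ((N:ℝ) - (e:ℝ)) := by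
      nlinarith [mul_le_mul_of_nonneg_left s2 (by positivity : (0:ℝ) ≤ 2*((e:ℝ)+1)^2),
        mul_le_mul_of_nonneg_right s1 (le_of_lt hNR0),
        mul_le_mul_of_nonneg_left hmR (le_of_lt hNR0)]
    have hmul : ((e:ℝ)+1) * (P * (2*(N:ℝ)))
        ≤ ((e:ℝ)+1) * (((N:ℝ) + 2*((e:ℝ)+1)^2) * Cd) := by
      have hid2 : ((N:ℝ) + 2*((e:ℝ)+1)^2) * (Cd * ((e:ℝ)+1))
          = ((N:ℝ) + 2*((e:ℝ)+1)^2) * (Ce * ((N:ℝ) - (e:ℝ))) := by rw [hid]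
      nlinarith [mul_le_mul_of_nonneg_right h1 (by positivity : (0:ℝ) ≤ 2*(N:ℝ)),
        mul_le_mul_of_nonneg_left hkey (le_of_lt hCe0), hid2]
    exact le_of_mul_le_mul_left hmul (by positivity)
  rcases le_or_gt (2*(e+1)*k) N with hB1 | hB2
  · -- Case B1 : union bound
    have hub := Stmt13Aux.union_bound v hN1 a e w (by
      intro h; apply hw; rw [h]; push_cast; ring)
    rw [hkcard] at hub
    set CC : ℝ := ((N-1).choose e : ℝ) with hCC
    have hPk : P ≤ (k:ℝ) * CC := by
      rw [hP, hCC]; exact_mod_cast hub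
    have hidN : (N:ℝ) * CC = Cd * ((e:ℝ)+1) := by
      have h := Nat.add_one_mul_choose_eq (N-1) e
      have hNs : N - 1 + 1 = N := Nat.succ_pred_eq_of_pos hN1
      rw [hNs] at h
      rw [hCC, hCd]
      exact_mod_cast h
    have hB1R : 2*((e:ℝ)+1)*(k:ℝ) ≤ (N:ℝ) := by
      have h : ((2*(e+1)*k : ℕ):ℝ) ≤ (N:ℝ) := by exact_mod_cast hB1
      push_cast at h; linarith
    have hCC0 : (0:ℝ) ≤ CC := by rw [hCC]; exact Nat.cast_nonneg _
    have hk0 : (0:ℝ) ≤ (k:ℝ) := Nat.cast_nonneg _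
    have hid3 : 2*(k:ℝ) * ((N:ℝ) * CC) = 2*(k:ℝ) * (Cd * ((e:ℝ)+1)) := by rw [hidN]
    nlinarith [mul_le_mul_of_nonneg_right hPk (by positivity : (0:ℝ) ≤ 2*(N:ℝ)), hid3,
      mul_le_mul_of_nonneg_right hB1R (le_of_lt hCd0),
      mul_nonneg (mul_nonneg (by norm_num : (0:ℝ) ≤ 2) (sq_nonneg ((e:ℝ)+1))) (le_of_lt hCd0)]
  · -- Case B2 : recursion with fixed point L = k/(2k-d+1)
    have hkm : k < m := by omega
    have hdk : e + 1 < k := by nlinarith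
    have hdkR : ((e:ℝ)+1) < (k:ℝ) := by exact_mod_cast hdk
    set L : ℝ := (k:ℝ) / (2*(k:ℝ) - ((e:ℝ)+1) + 1) with hL
    have hden : (0:ℝ) < 2*(k:ℝ) - ((e:ℝ)+1) + 1 := by linarith [Nat.cast_nonneg (α := ℝ) k]
    have hL0 : 0 ≤ L := div_nonneg (Nat.cast_nonneg k) (le_of_lt hden)
    have hLk : L * (2*(k:ℝ) - ((e:ℝ)+1) + 1) = (k:ℝ) := div_mul_cancel₀ _ (ne_of_gt hden)
    have hkmR : (k:ℝ) ≤ (m:ℝ) := by exact_mod_cast le_of_lt hkm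
    have hmkN : (m:ℝ) + (k:ℝ) = (N:ℝ) := by
      have h : m + k = N := by omega
      exact_mod_cast h
    have key : ∀ j : ℕ, j ≤ e+1 →
        ((Stmt13Aux.Bd v j (w - ((e+1-j : ℕ):ℝ)*a)).card : ℝ) ≤ L * (N.choose j : ℝ) := by
      intro j
      induction j with
      | zero =>
        intro _
        have hcard0 : (Stmt13Aux.Bd v 0 (w - ((e+1-0 : ℕ):ℝ)*a)).card = 0 := by
          rw [Finset.card_eq_zero]
          rw [Stmt13Aux.Bd, Finset.filter_eq_empty_iff]
          intro S hS
          have hS0 : S = ∅ := Finset.card_eq_zero.mp (Finset.mem_powersetCard.mp hS).2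
          subst hS0
          simp only [Finset.sum_empty]
          intro h0
          exact hw (by push_cast at h0 ⊢; linarith)
        rw [hcard0]
        simp only [Nat.cast_zero]
        exact mul_nonneg hL0 (Nat.cast_nonneg _)
      | succ j ih =>
        intro hj
        have hihj := ih (by omega)
        have hval : w - ((e+1-(j+1) : ℕ):ℝ)*a = (w - ((e+1-j : ℕ):ℝ)*a) + a := by
          have h1 : (e+1-j : ℕ) = (e+1-(j+1)) + 1 := by omega
          rw [h1]; push_cast; ring
        have hrev := Stmt13Aux.reveal v j (w - ((e+1-(j+1) : ℕ):ℝ)*a)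
        rw [hval] at hrev
        have hsb := Stmt13Aux.step_bound v a (w - ((e+1-j : ℕ):ℝ)*a) j m k hm.ge hcntk
        have hcomb := le_trans hrev hsb
        have hPjC := Stmt13Aux.Bd_card_le v j (w - ((e+1-j : ℕ):ℝ)*a)
        have h' : ((j:ℝ)+1) * ((Stmt13Aux.Bd v (j+1) ((w - ((e+1-j : ℕ):ℝ)*a) + a)).card : ℝ)
            ≤ (m:ℝ) * ((Stmt13Aux.Bd v j (w - ((e+1-j : ℕ):ℝ)*a)).card : ℝ)
              + (k:ℝ) * ((N.choose j : ℝ)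
                - ((Stmt13Aux.Bd v j (w - ((e+1-j : ℕ):ℝ)*a)).card : ℝ)) := by
          have hc : (((j+1) * (Stmt13Aux.Bd v (j+1)
                ((w - ((e+1-j : ℕ):ℝ)*a) + a)).card : ℕ) : ℝ)
              ≤ (((m * (Stmt13Aux.Bd v j (w - ((e+1-j : ℕ):ℝ)*a)).card
                + k * (N.choose j - (Stmt13Aux.Bd v j (w - ((e+1-j : ℕ):ℝ)*a)).card)) : ℕ) : ℝ) :=
            Nat.cast_le.mpr hcomb
          push_cast [Nat.cast_sub hPjC] at hc
          convert hc using 2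
        have hjN : j < N := by omega
        have hidj := hchooseid j hjN
        have hjR : (j:ℝ) ≤ (e:ℝ) := by exact_mod_cast Nat.lt_succ_iff.mp hj
        rw [hval]
        exact Stmt13Aux.arith_step hjR (Nat.cast_nonneg j) h' hihj hidj hL0 hLk hkmR hmkN
          (Nat.cast_nonneg _)
    have hkeyd := key (e+1) (le_refl _)
    simp only [Nat.sub_self, Nat.cast_zero, zero_mul, sub_zero] at hkeyd
    rw [← hP, ← hCd] at hkeyd
    have hkeyd' : P ≤ L * Cd := hkeyd
    have hB2R : (N:ℝ) < 2*((e:ℝ)+1)*(k:ℝ) := by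
      have h : ((N:ℕ):ℝ) < ((2*(e+1)*k : ℕ):ℝ) := by exact_mod_cast hB2
      push_cast at h; linarith
    have hLbound : L * (2*(N:ℝ)) ≤ (N:ℝ) + 2*((e:ℝ)+1)^2 := by
      rw [hL, div_mul_eq_mul_div, div_le_iff₀ hden]
      nlinarith [mul_lt_mul_of_pos_left hB2R (by positivity : (0:ℝ) < (e:ℝ)+1),
        mul_nonneg (by positivity : (0:ℝ) ≤ (e:ℝ)+1)
          (by linarith : (0:ℝ) ≤ (N:ℝ) - 2*((e:ℝ)+1)^2)]
    nlinarith [mul_le_mul_of_nonneg_right hkeyd' (by positivity : (0:ℝ) ≤ 2*(N:ℝ)),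
      mul_le_mul_of_nonneg_right hLbound (le_of_lt hCd0)]
end

section
/- Let X_1, …, X_d be i.i.d. random variables taking values in ℝ, and suppose a ∈ ℝ satisfies Pr[X_1 = a] ≥ Pr[X_1 = b] for every b ∈ ℝ. Then for every w ∈ ℝ with w ≠ d·a, Pr[X_1 + ⋯ + X_d = w] ≤ 1/2. -/
open MeasureTheory ProbabilityTheory NNReal ENNReal

lemma enn_final (u v pa p0 R : ℝ≥0∞) (hu : u ≤ 1/2) (huv : u + v ≤ 1)
    (hp : p0 ≤ pa) (hs : pa + p0 + R ≤ 1) :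
    u * pa + (v * p0 + (1/2) * R) ≤ 1/2 := by
  have hu1 : u ≤ 1 := le_trans hu (by norm_num)
  have hv1 : v ≤ 1 := le_trans le_add_self huv
  have hpa1 : pa ≤ 1 := le_trans (le_self_add.trans le_self_add) hs
  have hp01 : p0 ≤ 1 := le_trans hp hpa1
  have hR1 : R ≤ 1 := le_trans le_add_self hs
  lift u to ℝ≥0 using (hu1.trans_lt one_lt_top).ne
  lift v to ℝ≥0 using (hv1.trans_lt one_lt_top).ne
  lift pa to ℝ≥0 using (hpa1.trans_lt one_lt_top).ne
  lift p0 to ℝ≥0 using (hp01.trans_lt one_lt_top).ne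
  lift R to ℝ≥0 using (hR1.trans_lt one_lt_top).ne
  have hhalf : (1/2 : ℝ≥0∞) = ((1/2 : ℝ≥0) : ℝ≥0∞) := by
    rw [ENNReal.coe_div (by norm_num)]; norm_num
  rw [hhalf] at hu ⊢
  norm_cast at hu huv hp hs ⊢
  rw [← NNReal.coe_le_coe] at hu huv hp hs ⊢
  push_cast at hu huv hp hs ⊢
  have h2 : (v:ℝ) * p0 ≤ (1-u) * p0 := mul_le_mul_of_nonneg_right (by linarith) p0.coe_nonneg
  have h3 : (u:ℝ) * (pa - p0) ≤ (1/2) * (pa - p0) :=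
    mul_le_mul_of_nonneg_right hu (by linarith)
  nlinarith

lemma aux14 {Ω : Type*} [MeasureSpace Ω] [IsProbabilityMeasure (ℙ : Measure Ω)]
    {d : ℕ} (X : Fin d → Ω → ℝ)
    (hmeas : ∀ i, Measurable (X i))
    (hindep : iIndepFun X ℙ)
    (hfin : ∀ i, (Set.range (X i)).Finite)
    (a : ℝ) (p : ℝ → ℝ≥0∞)
    (hp : ∀ i x, ℙ {ω | X i ω = x} = p x)
    (hpa : ∀ b, p b ≤ p a)
    (s : Finset (Fin d)) :
    s.Nonempty → ∀ w : ℝ, w ≠ s.card * a →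
      ℙ {ω | ∑ i ∈ s, X i ω = w} ≤ 1 / 2 := by
  induction s using Finset.cons_induction with
  | empty => rintro ⟨x, hx⟩; exact absurd hx (Finset.notMem_empty x)
  | cons i t hit ih =>
    intro _ w hw
    -- point masses sum to at most 1 over any finite set of distinct values
    have hmeas_pt : ∀ (j : Fin d) (x : ℝ), MeasurableSet {ω | X j ω = x} :=
      fun j x => (hmeas j) (measurableSet_singleton x)
    -- a mode value bound: p b ≤ 1/2 for b ≠ a
    have hhalf : ∀ b : ℝ, b ≠ a → p b ≤ 1/2 := by
      intro b hb
      have hdisj : Disjoint {ω | X i ω = b} {ω | X i ω = a} :=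
        Set.disjoint_left.2 fun ω h1 h2 => hb (h1.symm.trans h2)
      have hle1 : p b + p a ≤ 1 := by
        rw [← hp i b, ← hp i a, ← measure_union hdisj (hmeas_pt i a)]
        exact prob_le_one
      rw [ENNReal.le_div_iff_mul_le (Or.inl two_ne_zero) (Or.inl ENNReal.ofNat_ne_top), mul_two]
      exact le_trans (add_le_add le_rfl (hpa b)) hle1
    rcases t.eq_empty_or_nonempty with rfl | htne
    · -- base case : single variable
      have hw1 : w ≠ a := by
        simpa using hw
      have : ℙ {ω | ∑ j ∈ Finset.cons i ∅ hit, X j ω = w} = p w := by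
        rw [← hp i w]; congr 1; ext ω; simp
      rw [this]
      exact hhalf w hw1
    · -- inductive step
      set SY : Ω → ℝ := fun ω => ∑ j ∈ t, X j ω with hSYdef
      set q : ℝ → ℝ≥0∞ := fun y => ℙ {ω | SY ω = y} with hqdef
      have hSYmeas : Measurable SY := Finset.measurable_sum t fun j _ => hmeas j
      have hmeas_q : ∀ c : ℝ, MeasurableSet {ω | SY ω = c} :=
        fun c => hSYmeas (measurableSet_singleton c)
      have hw' : w ≠ ((t.card : ℝ) + 1) * a := by
        rwa [Finset.card_cons, Nat.cast_add, Nat.cast_one] at hw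
      set x₀ : ℝ := w - t.card * a with hx0def
      have hax0 : a ≠ x₀ := fun h => hw' (by rw [hx0def] at h; linarith)
      set T : Finset ℝ := insert a (insert x₀ (hfin i).toFinset) with hTdef
      have haT : a ∈ T := Finset.mem_insert_self a _
      have hx0T : x₀ ∈ T.erase a :=
        Finset.mem_erase.2 ⟨Ne.symm hax0, Finset.mem_insert_of_mem (Finset.mem_insert_self _ _)⟩
      -- independence
      have hI : IndepFun (∑ j ∈ t, X j) (X i) ℙ :=
        hindep.indepFun_finsetSum_of_notMem hmeas hit
      have hmul : ∀ c x : ℝ, ℙ ({ω | SY ω = c} ∩ {ω | X i ω = x}) = q c * p x := by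
        intro c x
        have h := (indepFun_iff_measure_inter_preimage_eq_mul.1 hI) {c} {x}
          (measurableSet_singleton c) (measurableSet_singleton x)
        have hpre : (∑ j ∈ t, X j) ⁻¹' {c} = {ω | SY ω = c} := by
          ext ω; simp [hSYdef, Finset.sum_apply]
        have hpre2 : (X i) ⁻¹' {x} = {ω | X i ω = x} := rfl
        rw [hpre, hpre2] at h
        rw [h, hp i x, hqdef]
      -- decomposition of the event
      have hset : {ω | ∑ j ∈ Finset.cons i t hit, X j ω = w}
          = ⋃ x ∈ T, ({ω | SY ω = w - x} ∩ {ω | X i ω = x}) := by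
        ext ω
        simp only [Set.mem_setOf_eq, Set.mem_iUnion, Set.mem_inter_iff, Finset.sum_cons,
          exists_prop]
        constructor
        · intro h
          refine ⟨X i ω, ?_, by simp only [hSYdef]; linarith, rfl⟩
          exact Finset.mem_insert_of_mem (Finset.mem_insert_of_mem
            ((hfin i).mem_toFinset.2 ⟨ω, rfl⟩))
        · rintro ⟨x, -, h1, h2⟩
          simp only [hSYdef] at h1
          linarith
      have hdisjT : (↑T : Set ℝ).PairwiseDisjoint
          (fun x => {ω | SY ω = w - x} ∩ {ω | X i ω = x}) := by
        intro x _ y _ hxy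
        exact Set.disjoint_left.2 fun ω h1 h2 => hxy (h1.2.symm.trans h2.2)
      have hPW : ℙ {ω | ∑ j ∈ Finset.cons i t hit, X j ω = w} = ∑ x ∈ T, q (w - x) * p x := by
        rw [hset, measure_biUnion_finset hdisjT
          (fun x _ => (hmeas_q (w - x)).inter (hmeas_pt i x))]
        exact Finset.sum_congr rfl fun x _ => hmul (w - x) x
      -- sum of point masses over T is at most 1
      have hsum_p : ∑ x ∈ T, p x ≤ 1 := by
        have hd2 : (↑T : Set ℝ).PairwiseDisjoint (fun x => {ω | X i ω = x}) := by
          intro x _ y _ hxy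
          exact Set.disjoint_left.2 fun ω h1 h2 => hxy (h1.symm.trans h2)
        calc ∑ x ∈ T, p x = ∑ x ∈ T, ℙ {ω | X i ω = x} :=
              Finset.sum_congr rfl fun x _ => (hp i x).symm
          _ = ℙ (⋃ x ∈ T, {ω | X i ω = x}) :=
              (measure_biUnion_finset hd2 (fun x _ => hmeas_pt i x)).symm
          _ ≤ 1 := prob_le_one
      -- key quantities
      have hwa : w - a ≠ (t.card : ℝ) * a := fun h => hw' (by linarith)
      have hu : q (w - a) ≤ 1/2 := ih htne (w - a) hwa
      have huv : q (w - a) + q ((t.card : ℝ) * a) ≤ 1 := by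
        have hdisj : Disjoint {ω | SY ω = w - a} {ω | SY ω = (t.card : ℝ) * a} :=
          Set.disjoint_left.2 fun ω h1 h2 => hwa (h1.symm.trans h2)
        rw [hqdef]
        calc ℙ {ω | SY ω = w - a} + ℙ {ω | SY ω = (t.card : ℝ) * a}
            = ℙ ({ω | SY ω = w - a} ∪ {ω | SY ω = (t.card : ℝ) * a}) :=
              (measure_union hdisj (hmeas_q _)).symm
          _ ≤ 1 := prob_le_one
      -- split the sum
      have hwx0 : w - x₀ = (t.card : ℝ) * a := by rw [hx0def]; ring
      have hdec : ∑ x ∈ T, q (w - x) * p x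
          = q (w - a) * p a + (q ((t.card : ℝ) * a) * p x₀
            + ∑ x ∈ (T.erase a).erase x₀, q (w - x) * p x) := by
        rw [← Finset.add_sum_erase _ _ haT, ← Finset.add_sum_erase _ _ hx0T, hwx0]
      have hdecp : p a + (p x₀ + ∑ x ∈ (T.erase a).erase x₀, p x) = ∑ x ∈ T, p x := by
        rw [← Finset.add_sum_erase _ _ haT, ← Finset.add_sum_erase _ _ hx0T]
      -- bound the rest of the sum
      have hrest : ∑ x ∈ (T.erase a).erase x₀, q (w - x) * p x
          ≤ (1/2) * ∑ x ∈ (T.erase a).erase x₀, p x := by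
        rw [Finset.mul_sum]
        refine Finset.sum_le_sum fun x hx => ?_
        have hxx0 : x ≠ x₀ := (Finset.mem_erase.1 hx).1
        have : w - x ≠ (t.card : ℝ) * a := fun h => hxx0 (by rw [hx0def]; linarith)
        exact mul_le_mul_left (ih htne (w - x) this) _
      rw [hPW, hdec]
      refine le_trans (add_le_add le_rfl (add_le_add le_rfl hrest)) ?_
      exact enn_final _ _ _ _ _ hu huv (hpa x₀) (by rw [add_assoc, hdecp]; exact hsum_p)

open MeasureTheory ProbabilityTheory in
/-- If `X₁, …, X_d` are i.i.d. real random variables with finite support and `a` is a mode of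
their common distribution, then for every `w ≠ d·a`, `Pr[X₁ + ⋯ + X_d = w] ≤ 1/2`. -/
theorem stmt14 {Ω : Type*} [MeasureSpace Ω] [IsProbabilityMeasure (ℙ : Measure Ω)]
    {d : ℕ} (hd : 0 < d) (X : Fin d → Ω → ℝ)
    (hmeas : ∀ i, Measurable (X i))
    (hindep : iIndepFun X ℙ)
    (hident : ∀ i j, Measure.map (X i) ℙ = Measure.map (X j) ℙ)
    (hfin : ∀ i, (Set.range (X i)).Finite)
    (a : ℝ) (ha : ∀ b : ℝ, ℙ {ω | X ⟨0, hd⟩ ω = b} ≤ ℙ {ω | X ⟨0, hd⟩ ω = a})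
    (w : ℝ) (hw : w ≠ d * a) :
    ℙ {ω | ∑ i, X i ω = w} ≤ 1 / 2 := by
  haveI : NeZero d := ⟨hd.ne'⟩
  set p : ℝ → ℝ≥0∞ := fun x => ℙ {ω | X ⟨0, hd⟩ ω = x} with hpdef
  have hp : ∀ (i : Fin d) (x : ℝ), ℙ {ω | X i ω = x} = p x := by
    intro i x
    have h1 : ℙ {ω | X i ω = x} = Measure.map (X i) ℙ {x} :=
      (Measure.map_apply (hmeas i) (measurableSet_singleton x)).symm
    have h2 : ℙ {ω | X ⟨0, hd⟩ ω = x} = Measure.map (X ⟨0, hd⟩) ℙ {x} :=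
      (Measure.map_apply (hmeas _) (measurableSet_singleton x)).symm
    simp only [hpdef]; rw [h1, h2, hident i ⟨0, hd⟩]
  have hne : (Finset.univ : Finset (Fin d)).Nonempty := ⟨⟨0, hd⟩, Finset.mem_univ _⟩
  have hcard : ((Finset.univ : Finset (Fin d)).card : ℝ) = (d : ℝ) := by
    simp [Finset.card_univ]
  exact aux14 X hmeas hindep hfin a p hp (fun b => ha b) Finset.univ hne w (by rw [hcard]; exact hw)
end

section
/- Let X ∼ HypGeo(A, B, n) and set 1 − q = B/A. Then for every k, Pr[X = k] ≤ C(n,k) (1−q)^k (q + k/(A−n))^{n−k}. -/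
open Nat Finset

lemma key_nat (A B n k : ℕ) (hkn : k ≤ n) :
    B.choose k * (A - B).choose (n - k) * A.descFactorial n
      = n.choose k * (B.descFactorial k * (A - B).descFactorial (n - k)) * A.choose n := by
  have h1 : B.descFactorial k = k ! * B.choose k := Nat.descFactorial_eq_factorial_mul_choose _ _
  have h2 : (A - B).descFactorial (n - k) = (n - k)! * (A - B).choose (n - k) :=
    Nat.descFactorial_eq_factorial_mul_choose _ _
  have h3 : A.descFactorial n = n ! * A.choose n := Nat.descFactorial_eq_factorial_mul_choose _ _
  have h4 : n.choose k * k ! * (n - k)! = n ! := Nat.choose_mul_factorial_mul_factorial hkn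
  have hpos : 0 < k ! * (n - k)! := Nat.mul_pos k.factorial_pos (n - k).factorial_pos
  apply Nat.eq_of_mul_eq_mul_left hpos
  rw [h1, h2, h3, ← h4]
  ring

lemma desc_cast (x m : ℕ) (hm : m ≤ x) :
    (x.descFactorial m : ℝ) = ∏ i ∈ range m, ((x : ℝ) - i) := by
  rw [Nat.descFactorial_eq_prod_range, Nat.cast_prod]
  refine Finset.prod_congr rfl fun i hi => ?_
  rw [Nat.cast_sub (le_of_lt (lt_of_lt_of_le (mem_range.1 hi) hm))]

/-- Pointwise bound on the hypergeometric mass function: for `X ∼ HypGeo(A, B, n)` and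
`1 - q = B/A`, `Pr[X = k] ≤ C(n,k) (1-q)^k (q + k/(A-n))^{n-k}`. -/
theorem stmt17 (A B n k : ℕ) (hB : B ≤ A) (hn : n < A) (hkB : k ≤ B) (hkn : k ≤ n) :
    (B.choose k : ℝ) * ((A - B).choose (n - k)) / (A.choose n)
      ≤ (n.choose k : ℝ) * ((B : ℝ) / A) ^ k *
          ((1 - (B : ℝ) / A) + (k : ℝ) / ((A : ℝ) - n)) ^ (n - k) := by
  have hA0 : (0 : ℝ) < A := by
    have : 0 < A := by omega
    exact_mod_cast this
  have hAn : (0 : ℝ) < (A : ℝ) - n := by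
    have : (n : ℝ) < A := by exact_mod_cast hn
    linarith
  have hBA : (B : ℝ) ≤ A := by exact_mod_cast hB
  have hbase : (0 : ℝ) ≤ (1 - (B : ℝ) / A) + (k : ℝ) / ((A : ℝ) - n) := by
    have h1 : (B : ℝ) / A ≤ 1 := by rw [div_le_one hA0]; exact hBA
    have h2 : (0 : ℝ) ≤ (k : ℝ) / ((A : ℝ) - n) := by positivity
    linarith
  by_cases hcase : n - k ≤ A - B
  swap
  · rw [show ((A - B).choose (n - k)) = 0 from Nat.choose_eq_zero_of_lt (by omega)]
    have : (0:ℝ) ≤ (n.choose k : ℝ) * ((B : ℝ) / A) ^ k *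
        ((1 - (B : ℝ) / A) + (k : ℝ) / ((A : ℝ) - n)) ^ (n - k) := by positivity
    simpa using this
  -- main case
  have hdA : 0 < A.descFactorial n :=
    Nat.pos_of_ne_zero (fun h => by rw [Nat.descFactorial_eq_zero_iff_lt] at h; omega)
  have hcA : 0 < A.choose n := Nat.choose_pos hn.le
  have e1 : (B.choose k : ℝ) * ((A - B).choose (n - k)) / (A.choose n)
      = (n.choose k : ℝ) * ((B.descFactorial k : ℝ) * ((A - B).descFactorial (n - k) : ℝ))
        / (A.descFactorial n : ℝ) := by
    rw [div_eq_div_iff (by exact_mod_cast hcA.ne') (by exact_mod_cast hdA.ne')]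
    exact_mod_cast key_nat A B n k hkn
  rw [e1]
  -- product forms
  have ePB : (B.descFactorial k : ℝ) = ∏ i ∈ range k, ((B : ℝ) - i) := desc_cast B k hkB
  have ePAB : ((A - B).descFactorial (n - k) : ℝ)
      = ∏ j ∈ range (n - k), ((A : ℝ) - B - j) := by
    rw [desc_cast (A - B) (n - k) hcase]
    refine Finset.prod_congr rfl fun j _ => ?_
    rw [Nat.cast_sub hB]
  have ePA : (A.descFactorial n : ℝ)
      = (∏ i ∈ range k, ((A : ℝ) - i)) * ∏ j ∈ range (n - k), ((A : ℝ) - ((k : ℝ) + j)) := by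
    rw [desc_cast A n hn.le, show range n = range (k + (n - k)) by
      rw [Nat.add_sub_cancel' hkn], Finset.prod_range_add]
    exact congrArg _ (Finset.prod_congr rfl fun j _ => by push_cast; ring)
  have hPA1 : (0 : ℝ) < ∏ i ∈ range k, ((A : ℝ) - i) := by
    apply Finset.prod_pos
    intro i hi
    have hik : i < k := mem_range.1 hi
    have : (i : ℝ) < A := by exact_mod_cast (by omega : i < A)
    linarith
  have hPA2 : (0 : ℝ) < ∏ j ∈ range (n - k), ((A : ℝ) - ((k : ℝ) + j)) := by
    apply Finset.prod_pos
    intro j hj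
    have hj' : j < n - k := mem_range.1 hj
    have : ((k + j : ℕ) : ℝ) < A := by exact_mod_cast (by omega : k + j < A)
    push_cast at this; linarith
  rw [ePB, ePAB, ePA]
  have hb1 : (∏ i ∈ range k, ((B : ℝ) - i)) / (∏ i ∈ range k, ((A : ℝ) - i))
      ≤ ((B : ℝ) / A) ^ k := by
    rw [← Finset.prod_div_distrib,
      show ((B : ℝ) / A) ^ k = ∏ _i ∈ range k, ((B : ℝ) / A) by
        rw [Finset.prod_const, Finset.card_range]]
    apply Finset.prod_le_prod
    · intro i hi
      have hik : i < k := mem_range.1 hi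
      have hiB : (i : ℝ) ≤ B := by exact_mod_cast (by omega : i ≤ B)
      have hiA : (i : ℝ) < A := by exact_mod_cast (by omega : i < A)
      apply div_nonneg <;> linarith
    · intro i hi
      have hik : i < k := mem_range.1 hi
      have hiB : (i : ℝ) ≤ B := by exact_mod_cast (by omega : i ≤ B)
      have hiA : (i : ℝ) < A := by exact_mod_cast (by omega : i < A)
      rw [div_le_div_iff₀ (by linarith) hA0]
      have hi0 : (0 : ℝ) ≤ i := Nat.cast_nonneg i
      nlinarith [mul_nonneg hi0 (sub_nonneg.2 hBA)]
  have hb2 : (∏ j ∈ range (n - k), ((A : ℝ) - B - j)) /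
        (∏ j ∈ range (n - k), ((A : ℝ) - ((k : ℝ) + j)))
      ≤ ((1 - (B : ℝ) / A) + (k : ℝ) / ((A : ℝ) - n)) ^ (n - k) := by
    rw [← Finset.prod_div_distrib,
      show ((1 - (B : ℝ) / A) + (k : ℝ) / ((A : ℝ) - n)) ^ (n - k)
          = ∏ _j ∈ range (n - k), ((1 - (B : ℝ) / A) + (k : ℝ) / ((A : ℝ) - n)) by
        rw [Finset.prod_const, Finset.card_range]]
    apply Finset.prod_le_prod
    · intro j hj
      have hj' : j < n - k := mem_range.1 hj
      have hjAB : (j : ℝ) < (A : ℝ) - B := by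
        have : (j : ℝ) < ((A - B : ℕ) : ℝ) := by exact_mod_cast (by omega : j < A - B)
        rwa [Nat.cast_sub hB] at this
      have hD : (0 : ℝ) < (A : ℝ) - ((k : ℝ) + j) := by
        have : ((k + j : ℕ) : ℝ) < A := by exact_mod_cast (by omega : k + j < A)
        push_cast at this; linarith
      apply div_nonneg <;> linarith
    · intro j hj
      have hj' : j < n - k := mem_range.1 hj
      have hjAB : (j : ℝ) < (A : ℝ) - B := by
        have : (j : ℝ) < ((A - B : ℕ) : ℝ) := by exact_mod_cast (by omega : j < A - B)
        rwa [Nat.cast_sub hB] at this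
      have hkjn : (k : ℝ) + j < n := by
        have : ((k + j : ℕ) : ℝ) < n := by exact_mod_cast (by omega : k + j < n)
        push_cast at this; linarith
      have hD : (0 : ℝ) < (A : ℝ) - ((k : ℝ) + j) := by linarith
      have hk0 : (0 : ℝ) ≤ k := Nat.cast_nonneg k
      have hj0 : (0 : ℝ) ≤ j := Nat.cast_nonneg j
      have hB0 : (0 : ℝ) ≤ B := Nat.cast_nonneg B
      have t1 : ((A : ℝ) - B - j - k) / ((A : ℝ) - ((k : ℝ) + j)) ≤ ((A : ℝ) - B) / A := by
        rw [div_le_div_iff₀ hD hA0]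
        nlinarith [mul_nonneg hB0 (add_nonneg hk0 hj0)]
      have t2 : (k : ℝ) / ((A : ℝ) - ((k : ℝ) + j)) ≤ (k : ℝ) / ((A : ℝ) - n) := by
        gcongr <;> linarith
      have hsplit : ((A : ℝ) - B - j) / ((A : ℝ) - ((k : ℝ) + j))
          = ((A : ℝ) - B - j - k) / ((A : ℝ) - ((k : ℝ) + j))
            + (k : ℝ) / ((A : ℝ) - ((k : ℝ) + j)) := by ring
      have hq : 1 - (B : ℝ) / A = ((A : ℝ) - B) / A := by field_simp
      rw [hsplit, hq]
      linarith
  have hP1nn : (0 : ℝ) ≤ (∏ i ∈ range k, ((B : ℝ) - i)) / (∏ i ∈ range k, ((A : ℝ) - i)) := by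
    apply div_nonneg _ hPA1.le
    apply Finset.prod_nonneg
    intro i hi
    have : (i : ℝ) ≤ B := by exact_mod_cast (by have := mem_range.1 hi; omega : i ≤ B)
    linarith
  calc (n.choose k : ℝ) * ((∏ i ∈ range k, ((B : ℝ) - i)) * ∏ j ∈ range (n - k), ((A : ℝ) - B - j))
        / ((∏ i ∈ range k, ((A : ℝ) - i)) * ∏ j ∈ range (n - k), ((A : ℝ) - ((k : ℝ) + j)))
      = (n.choose k : ℝ) * (((∏ i ∈ range k, ((B : ℝ) - i)) / (∏ i ∈ range k, ((A : ℝ) - i)))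
          * ((∏ j ∈ range (n - k), ((A : ℝ) - B - j))
            / (∏ j ∈ range (n - k), ((A : ℝ) - ((k : ℝ) + j))))) := by
        rw [_root_.div_mul_div_comm]; ring
    _ ≤ (n.choose k : ℝ) * (((B : ℝ) / A) ^ k
          * ((1 - (B : ℝ) / A) + (k : ℝ) / ((A : ℝ) - n)) ^ (n - k)) := by
        apply mul_le_mul_of_nonneg_left _ (Nat.cast_nonneg _)
        apply mul_le_mul hb1 hb2 _ (by positivity)
        apply div_nonneg _ hPA2.le
        apply Finset.prod_nonneg
        intro j hj
        have : (j : ℝ) < (A : ℝ) - B := by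
          have : (j : ℝ) < ((A - B : ℕ) : ℝ) := by
            exact_mod_cast (by have := mem_range.1 hj; omega : j < A - B)
          rwa [Nat.cast_sub hB] at this
        linarith
    _ = (n.choose k : ℝ) * ((B : ℝ) / A) ^ k
          * ((1 - (B : ℝ) / A) + (k : ℝ) / ((A : ℝ) - n)) ^ (n - k) := by ring
end

section
/- Let k ≥ 2 and let M be a {0,1}-matrix with k columns that is a minimal linear dependency with exactly 2k ones and exactly k nonzero rows. Then the nonzero rows of M form the edge-vertex incidence matrix of a tree on k vertices together with one additional edge (possibly a multi-edge) joining two vertices whose distance in the tree is odd. Conversely, every such tree-with-added-odd-edge incidence matrix is a minimal linear dependency with 2k ones and k nonzero rows. -/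
open SimpleGraph Finset Module

section Graph
variable {V : Type*} {G : SimpleGraph V}

lemma aux_reachable_delete {e : Sym2 V}
    (hre : ∀ a b : V, G.Adj a b → s(a, b) = e → (G \ SimpleGraph.fromEdgeSet {e}).Reachable a b) :
    ∀ {u v : V}, (w : G.Walk u v) → (G \ SimpleGraph.fromEdgeSet {e}).Reachable u v := by
  intro u v w
  induction w with
  | nil => rfl
  | @cons a c d h p ih =>
    refine Reachable.trans ?_ ih
    by_cases he : s(a, c) = e
    · exact hre _ _ h he
    · exact Adj.reachable (by simp [SimpleGraph.fromEdgeSet_adj, he, h, h.ne])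

lemma aux_connected_delete {x y : V} (hc : G.Connected)
    (hr : (G \ SimpleGraph.fromEdgeSet {s(x, y)}).Reachable x y) :
    (G \ SimpleGraph.fromEdgeSet {s(x, y)}).Connected := by
  haveI := hc.nonempty
  refine ⟨fun u v => ?_⟩
  obtain ⟨w⟩ := hc.preconnected u v
  refine aux_reachable_delete (fun a b hab he => ?_) w
  rw [Sym2.eq_iff] at he
  rcases he with ⟨rfl, rfl⟩ | ⟨rfl, rfl⟩
  · exact hr
  · exact hr.symm

lemma aux_exists_spanning_tree [Fintype V] (hG : G.Connected) :
    ∃ T : SimpleGraph V, T ≤ G ∧ T.IsTree := by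
  classical
  suffices h : ∀ (n : ℕ) (G : SimpleGraph V), G.Connected → G.edgeSet.ncard = n →
      ∃ T : SimpleGraph V, T ≤ G ∧ T.IsTree from h _ G hG rfl
  intro n
  induction n using Nat.strong_induction_on with
  | _ n ih =>
    intro G hG hn
    by_cases ha : G.IsAcyclic
    · exact ⟨G, le_refl _, hG, ha⟩
    · rw [SimpleGraph.isAcyclic_iff_forall_adj_isBridge] at ha
      push_neg at ha
      obtain ⟨x, y, hxy, hbr⟩ := ha
      rw [SimpleGraph.isBridge_iff] at hbr
      push_neg at hbr
      have hrea : (G \ SimpleGraph.fromEdgeSet {s(x, y)}).Reachable x y := hbr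
      have hc' := aux_connected_delete hG hrea
      have hes : (G \ SimpleGraph.fromEdgeSet {s(x, y)}).edgeSet = G.edgeSet \ {s(x, y)} := by
        simp [edgeSet_sdiff, edgeSet_fromEdgeSet, edgeSet_sdiff_sdiff_isDiag]
      have hmem : s(x, y) ∈ G.edgeSet := hxy
      have hcard : (G \ SimpleGraph.fromEdgeSet {s(x, y)}).edgeSet.ncard = n - 1 := by
        rw [hes, Set.ncard_diff_singleton_of_mem hmem, hn]
      have hpos : 1 ≤ n := by
        rw [← hn]
        exact (Set.ncard_pos (Set.toFinite _)).2 ⟨_, hmem⟩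
      obtain ⟨T, hT1, hT2⟩ := ih (n - 1) (by omega) _ hc' hcard
      exact ⟨T, hT1.trans sdiff_le, hT2⟩

lemma aux_card_le_of_connected [Fintype V] [Fintype G.edgeSet] (hG : G.Connected) :
    Fintype.card V ≤ #G.edgeFinset + 1 := by
  classical
  obtain ⟨T, hle, hT⟩ := aux_exists_spanning_tree hG
  rw [← hT.card_edgeFinset]
  exact Nat.add_le_add_right (Finset.card_le_card (edgeFinset_mono hle)) 1

lemma aux_isTree_of_card [Fintype V] [Fintype G.edgeSet] (hG : G.Connected)
    (hcard : #G.edgeFinset + 1 = Fintype.card V) : G.IsTree := by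
  classical
  obtain ⟨T, hle, hT⟩ := aux_exists_spanning_tree hG
  have h1 : T.edgeFinset ⊆ G.edgeFinset := edgeFinset_mono hle
  have h2 : #G.edgeFinset ≤ #T.edgeFinset := by
    have := hT.card_edgeFinset
    omega
  have h3 : T.edgeFinset = G.edgeFinset := Finset.eq_of_subset_of_card_le h1 h2
  have : T = G := by
    apply SimpleGraph.edgeSet_inj.1
    rw [← coe_edgeFinset, ← coe_edgeFinset, h3]
  exact this ▸ hT

/-- In a tree, adjacent vertices have distances of opposite parity to any root. -/
lemma aux_tree_parity [Fintype V]
    (hT : G.IsTree) (root : V) {i j : V} (h : G.Adj i j) :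
    Odd (G.dist root i + G.dist root j) := by
  classical
  have hc := hT.isConnected
  have hd1 : G.dist root j ≤ G.dist root i + 1 := by
    have := hc.dist_triangle (u := root) (v := i) (w := j)
    rwa [SimpleGraph.dist_eq_one_iff_adj.2 h] at this
  have hd2 : G.dist root i ≤ G.dist root j + 1 := by
    have := hc.dist_triangle (u := root) (v := j) (w := i)
    rwa [SimpleGraph.dist_eq_one_iff_adj.2 h.symm] at this
  have hne : G.dist root i ≠ G.dist root j := by
    -- key acyclicity argument
    intro heq
    obtain ⟨p, hp, hlp⟩ := hc.exists_path_of_dist root i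
    have hjns : j ∉ p.support := by
      intro hjs
      have h1 : G.dist root j ≤ (p.takeUntil j hjs).length := SimpleGraph.dist_le _
      have h2 : (p.takeUntil j hjs).length + (p.dropUntil j hjs).length = p.length := by
        have := congrArg SimpleGraph.Walk.length (p.take_spec hjs)
        rwa [SimpleGraph.Walk.length_append] at this
      have h3 : (p.dropUntil j hjs).length = 0 := by omega
      exact h.ne' (SimpleGraph.Walk.eq_of_length_eq_zero h3)
    -- two distinct paths from j to root
    have hw' : (SimpleGraph.Walk.cons h.symm p.reverse).IsPath := by
      rw [SimpleGraph.Walk.cons_isPath_iff]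
      constructor
      · rwa [SimpleGraph.Walk.isPath_reverse_iff]
      · rwa [SimpleGraph.Walk.support_reverse, List.mem_reverse]
    obtain ⟨q, hq, hlq⟩ := hc.exists_path_of_dist root j
    have hqr : q.reverse.IsPath := by rwa [SimpleGraph.Walk.isPath_reverse_iff]
    have hu := hT.IsAcyclic.path_unique ⟨_, hw'⟩ ⟨_, hqr⟩
    have := congrArg (fun p : G.Path j root => (p : G.Walk j root).length) hu
    simp only [SimpleGraph.Walk.length_cons, SimpleGraph.Walk.length_reverse] at this
    omega
  have : G.dist root j = G.dist root i + 1 ∨ G.dist root i = G.dist root j + 1 := by omega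
  rcases this with h' | h' <;> rw [h'] <;> [exact ⟨G.dist root i, by ring⟩; exact ⟨G.dist root j, by ring⟩]

lemma aux_sign_walk {y : V → ℝ} (hy : ∀ a b : V, G.Adj a b → y a + y b = 0)
    {u v : V} (w : G.Walk u v) : y v = (-1 : ℝ) ^ w.length * y u := by
  induction w with
  | nil => simp
  | @cons a c d h p ih =>
    rw [SimpleGraph.Walk.length_cons, ih]
    have h2 : y c = - y a := by linarith [hy a c h]
    rw [h2, pow_succ]
    ring

lemma aux_odd_dist (hG : G.Connected) {y : V → ℝ} (hy : ∀ a b : V, G.Adj a b → y a + y b = 0)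
    {a b : V} (h0 : y a + y b = 0) (ha : y a ≠ 0) : Odd (G.dist a b) := by
  obtain ⟨w, hw⟩ := hG.exists_walk_length_eq_dist a b
  have h1 := aux_sign_walk hy w
  rw [hw] at h1
  rw [← Nat.not_even_iff_odd]
  intro hev
  rw [hev.neg_one_pow, one_mul] at h1
  rw [h1] at h0
  exact ha (by linarith)

end Graph


section MatrixAux
variable {m k : ℕ} {M : Matrix (Fin m) (Fin k) ℝ}

lemma aux_mulVec_zero_row {r : Fin m} (h : ∀ l, M r l = 0) (y : Fin k → ℝ) :
    M.mulVec y r = 0 := by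
  simp [Matrix.mulVec, dotProduct, h]

lemma aux_isEdgeRow_symm {r : Fin m} {i j : Fin k} (h : IsEdgeRow M r i j) :
    IsEdgeRow M r j i := fun l => by simp [h l, or_comm]

lemma aux_mulVec_edgeRow {r : Fin m} {i j : Fin k} (hij : i ≠ j) (h : IsEdgeRow M r i j)
    (y : Fin k → ℝ) : M.mulVec y r = y i + y j := by
  have key : ∀ l, M r l * y l = (if l = i then y i else 0) + (if l = j then y j else 0) := by
    intro l
    rw [h l]
    by_cases h1 : l = i <;> by_cases h2 : l = j <;> simp_all
  simp only [Matrix.mulVec, dotProduct, key, Finset.sum_add_distrib,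
    Finset.sum_ite_eq', Finset.mem_univ, if_pos]

lemma aux_edgeRow_filter {r : Fin m} {i j : Fin k} (hij : i ≠ j) (h : IsEdgeRow M r i j) :
    Finset.univ.filter (fun l => M r l = 1) = {i, j} := by
  ext l
  simp only [Finset.mem_filter, Finset.mem_univ, true_and, Finset.mem_insert,
    Finset.mem_singleton, h l]
  by_cases h1 : l = i <;> by_cases h2 : l = j <;> simp_all

lemma aux_edgeRow_pair_eq {r : Fin m} {i j i' j' : Fin k} (hij : i ≠ j)
    (h : IsEdgeRow M r i j) (h' : IsEdgeRow M r i' j') : s(i, j) = s(i', j') := by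
  have hi : i = i' ∨ i = j' := by
    have := (h' i).symm.trans (h i)
    by_contra hc
    push_neg at hc
    simp [hc.1, hc.2] at this
  have hj : j = i' ∨ j = j' := by
    have := (h' j).symm.trans (h j)
    by_contra hc
    push_neg at hc
    simp [hc.1, hc.2] at this
  rw [Sym2.eq_iff]
  rcases hi with rfl | rfl <;> rcases hj with h3 | h3 <;> tauto

lemma aux_exists_edgeRow (h01 : ∀ i j, M i j = 0 ∨ M i j = 1) {r : Fin m}
    (h2 : #(Finset.univ.filter (fun l => M r l = 1)) = 2) :
    ∃ i j : Fin k, i ≠ j ∧ IsEdgeRow M r i j := by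
  obtain ⟨i, j, hij, hs⟩ := Finset.card_eq_two.1 h2
  refine ⟨i, j, hij, fun l => ?_⟩
  have hiff : M r l = 1 ↔ (l = i ∨ l = j) := by
    have := Finset.ext_iff.1 hs l
    simpa using this
  by_cases hc : l = i ∨ l = j
  · rw [if_pos hc]
    exact hiff.2 hc
  · rw [if_neg hc]
    rcases h01 r l with h0 | h1
    · exact h0
    · exact absurd (hiff.1 h1) hc

lemma aux_ones_split :
    #(Finset.univ.filter (fun p : Fin m × Fin k => M p.1 p.2 = 1)) =
      ∑ r : Fin m, #(Finset.univ.filter (fun l => M r l = 1)) := by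
  rw [Finset.card_eq_sum_card_fiberwise (f := Prod.fst) (t := Finset.univ)
    (fun x _ => Finset.mem_univ _)]
  refine Finset.sum_congr rfl fun r _ => ?_
  refine Finset.card_nbij' (fun p => p.2) (fun l => (r, l)) ?_ ?_ ?_ ?_ <;>
    simp +contextual [Finset.mem_filter]
  rintro a ⟨hab, rfl⟩
  exact hab
  · intro l hl
    exact ⟨hl, rfl⟩
  · rintro ⟨a1, a2⟩ ⟨_, rfl⟩
    rfl
  · intro l _
    rfl

lemma aux_rank_nullity (M : Matrix (Fin m) (Fin k) ℝ) :
    M.rank + finrank ℝ (LinearMap.ker M.mulVecLin) = k := by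
  have := LinearMap.finrank_range_add_finrank_ker M.mulVecLin
  rwa [finrank_fin_fun] at this

lemma aux_smul_of_finrank_one {W : Submodule ℝ (Fin k → ℝ)} (hW : finrank ℝ W = 1)
    {x y : Fin k → ℝ} (hx : x ∈ W) (hy : y ∈ W) (hx0 : x ≠ 0) : ∃ t : ℝ, y = t • x := by
  have hle : Submodule.span ℝ {x} ≤ W := (Submodule.span_singleton_le_iff_mem x W).2 hx
  have hsp : finrank ℝ (Submodule.span ℝ {x} : Submodule ℝ (Fin k → ℝ)) = 1 :=
    finrank_span_singleton hx0
  have heq : Submodule.span ℝ {x} = W := by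
    apply Submodule.eq_of_le_of_finrank_le hle
    rw [hsp, hW]
  rw [← heq] at hy
  obtain ⟨t, ht⟩ := Submodule.mem_span_singleton.1 hy
  exact ⟨t, ht.symm⟩

end MatrixAux


lemma stmt18_bwd {m k : ℕ} (hk : 2 ≤ k) (M : Matrix (Fin m) (Fin k) ℝ)
    (h01 : ∀ i j, M i j = 0 ∨ M i j = 1)
    (G : SimpleGraph (Fin k)) (a b : Fin k) (r0 : Fin m)
    (hT : G.IsTree) (hodd : Odd (G.dist a b)) (hr0 : IsEdgeRow M r0 a b)
    (huniq : ∀ i j, G.Adj i j → ∃! r, r ≠ r0 ∧ IsEdgeRow M r i j)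
    (hrest : ∀ r, r ≠ r0 → (∀ l, M r l = 0) ∨ ∃ i j, G.Adj i j ∧ IsEdgeRow M r i j) :
    (M.rank = k - 1 ∧ ∃ x : Fin k → ℝ, M.mulVec x = 0 ∧ ∀ j, x j ≠ 0) ∧
      Set.ncard {p : Fin m × Fin k | M p.1 p.2 = 1} = 2 * k ∧
      Set.ncard {r : Fin m | ∃ l, M r l ≠ 0} = k := by
  classical
  have hab : a ≠ b := by
    rintro rfl
    rw [SimpleGraph.dist_self] at hodd
    simp [Nat.odd_iff] at hodd
  set x : Fin k → ℝ := fun v => if Even (G.dist a v) then 1 else -1 with hxdef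
  have hx0 : ∀ v, x v ≠ 0 := fun v => by
    by_cases h : Even (G.dist a v) <;> simp [hxdef, h]
  have hpar : ∀ i j, G.Adj i j → x i + x j = 0 := by
    intro i j hadj
    have hne : ¬(Even (G.dist a i) ↔ Even (G.dist a j)) := by
      rw [← Nat.even_add]
      exact Nat.not_even_iff_odd.2 (aux_tree_parity hT a hadj)
    by_cases hi : Even (G.dist a i) <;> by_cases hj : Even (G.dist a j) <;>
      simp [hxdef, hi, hj] at hne ⊢ <;> tauto
  have hxa : x a = 1 := by simp [hxdef, SimpleGraph.dist_self]
  have hxb : x b = -1 := by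
    have : ¬ Even (G.dist a b) := Nat.not_even_iff_odd.2 hodd
    simp [hxdef, this]
  have hmul : M.mulVec x = 0 := by
    funext r
    by_cases hr : r = r0
    · subst hr
      rw [aux_mulVec_edgeRow hab hr0, hxa, hxb]
      simp
    · rcases hrest r hr with hz | ⟨i, j, hadj, hrow⟩
      · rw [aux_mulVec_zero_row hz]; simp
      · rw [aux_mulVec_edgeRow hadj.ne hrow, hpar i j hadj]; simp
  -- kernel is spanned by x
  have hker : ∀ y : Fin k → ℝ, M.mulVec y = 0 → ∀ v, y v = y a * x v := by
    intro y hy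
    have hstep : ∀ u w : Fin k, G.Adj u w → y u = y a * x u → y w = y a * x w := by
      intro u w hadj hu
      obtain ⟨r, ⟨hrne, hrow⟩, _⟩ := huniq u w hadj
      have h1 : y u + y w = 0 := by
        have := congrFun hy r
        rwa [aux_mulVec_edgeRow hadj.ne hrow, Pi.zero_apply] at this
      have h2 : x u + x w = 0 := hpar u w hadj
      have h3 : x w = - x u := by linarith
      have h4 : y w = - y u := by linarith
      rw [h4, hu, h3]; ring
    intro v
    obtain ⟨w⟩ := hT.isConnected.preconnected a v
    have main : ∀ (u vv : Fin k) (w : G.Walk u vv), y u = y a * x u → y vv = y a * x vv := by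
      intro u vv w
      induction w with
      | nil => exact id
      | @cons u c d h p ih => exact fun hu => ih (hstep _ _ h hu)
    exact main a v w (by rw [hxa]; ring)
  have hxne : x ≠ 0 := fun h => hx0 a (by rw [h]; rfl)
  have hkerker : LinearMap.ker M.mulVecLin = Submodule.span ℝ {x} := by
    apply le_antisymm
    · intro y hy
      rw [LinearMap.mem_ker, Matrix.mulVecLin_apply] at hy
      rw [Submodule.mem_span_singleton]
      exact ⟨y a, by funext v; rw [Pi.smul_apply, smul_eq_mul]; exact (hker y hy v).symm⟩
    · rw [Submodule.span_singleton_le_iff_mem, LinearMap.mem_ker, Matrix.mulVecLin_apply]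
      exact hmul
  have hnul : finrank ℝ (LinearMap.ker M.mulVecLin) = 1 := by
    rw [hkerker]; exact finrank_span_singleton hxne
  have hrank : M.rank = k - 1 := by
    have := aux_rank_nullity M
    omega
  -- counting
  set rows : Finset (Fin m) := Finset.univ.filter (fun r => ∃ l, M r l ≠ 0) with hrowsdef
  have hr0m : r0 ∈ rows := by
    simp only [hrowsdef, Finset.mem_filter, Finset.mem_univ, true_and]
    exact ⟨a, by rw [hr0 a]; simp⟩
  have hpairex : ∀ r : Fin m, ∃ i j : Fin k, r ∈ rows.erase r0 → G.Adj i j ∧ IsEdgeRow M r i j := by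
    intro r
    by_cases hr : r ∈ rows.erase r0
    · have hne : r ≠ r0 := (Finset.mem_erase.1 hr).1
      rcases hrest r hne with hz | ⟨i, j, hadj, hrow⟩
      · exfalso
        have := (Finset.mem_erase.1 hr).2
        simp only [hrowsdef, Finset.mem_filter, Finset.mem_univ, true_and] at this
        obtain ⟨l, hl⟩ := this
        exact hl (hz l)
      · exact ⟨i, j, fun _ => ⟨hadj, hrow⟩⟩
    · exact ⟨⟨0, by omega⟩, ⟨0, by omega⟩, fun h => absurd h hr⟩
  choose I J hIJ using hpairex
  have hrow_mem : ∀ {r : Fin m} {i j : Fin k}, IsEdgeRow M r i j → r ∈ rows := by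
    intro r i j hrow
    simp only [hrowsdef, Finset.mem_filter, Finset.mem_univ, true_and]
    exact ⟨i, by rw [hrow i]; simp⟩
  have hcard_erase : #(rows.erase r0) = #G.edgeFinset := by
    apply Finset.card_bij (fun r _ => s(I r, J r))
    · intro r hr
      rw [SimpleGraph.mem_edgeFinset, SimpleGraph.mem_edgeSet]
      exact (hIJ r hr).1
    · intro r1 h1 r2 h2 heq
      obtain ⟨hadj1, hrow1⟩ := hIJ r1 h1
      obtain ⟨hadj2, hrow2⟩ := hIJ r2 h2
      have hrow2' : IsEdgeRow M r2 (I r1) (J r1) := by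
        rw [Sym2.eq_iff] at heq
        rcases heq with ⟨h3, h4⟩ | ⟨h3, h4⟩
        · rwa [h3, h4]
        · rw [← h3, ← h4] at hrow2
          intro l; simp [hrow2 l, or_comm]
      obtain ⟨rr, _, hun⟩ := huniq (I r1) (J r1) hadj1
      have e1 := hun r1 ⟨(Finset.mem_erase.1 h1).1, hrow1⟩
      have e2 := hun r2 ⟨(Finset.mem_erase.1 h2).1, hrow2'⟩
      rw [e1, e2]
    · intro e he
      induction e using Sym2.ind with
      | _ i j =>
        have hadj : G.Adj i j := SimpleGraph.mem_edgeFinset.1 he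
        obtain ⟨r, ⟨hrne, hrow⟩, _⟩ := huniq i j hadj
        have hrm : r ∈ rows.erase r0 := Finset.mem_erase.2 ⟨hrne, hrow_mem hrow⟩
        exact ⟨r, hrm, (aux_edgeRow_pair_eq hadj.ne hrow (hIJ r hrm).2).symm⟩
  have hcount_rows : #rows = k := by
    have h1 : #G.edgeFinset = k - 1 := by
      have := hT.card_edgeFinset
      rw [Fintype.card_fin] at this
      omega
    have h2 := Finset.card_erase_add_one hr0m
    omega
  have hnrows : Set.ncard {r : Fin m | ∃ l, M r l ≠ 0} = k := by
    have hs : {r : Fin m | ∃ l, M r l ≠ 0} = ↑rows := by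
      ext r; simp [hrowsdef]
    rw [hs, Set.ncard_coe_finset, hcount_rows]
  have hcnt : ∀ r ∈ rows, #(Finset.univ.filter (fun l => M r l = 1)) = 2 := by
    intro r hr
    by_cases hre : r = r0
    · subst hre
      rw [aux_edgeRow_filter hab hr0]
      exact Finset.card_pair hab
    · have hrm : r ∈ rows.erase r0 := Finset.mem_erase.2 ⟨hre, hr⟩
      obtain ⟨hadj, hrow⟩ := hIJ r hrm
      rw [aux_edgeRow_filter hadj.ne hrow]
      exact Finset.card_pair hadj.ne
  have hcnt0 : ∀ r ∉ rows, #(Finset.univ.filter (fun l => M r l = 1)) = 0 := by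
    intro r hr
    simp only [hrowsdef, Finset.mem_filter, Finset.mem_univ, true_and, not_exists, not_not] at hr
    rw [Finset.card_eq_zero, Finset.filter_eq_empty_iff]
    intro l _
    rw [hr l]
    norm_num
  have hones : Set.ncard {p : Fin m × Fin k | M p.1 p.2 = 1} = 2 * k := by
    have hset : {p : Fin m × Fin k | M p.1 p.2 = 1} =
        ↑(Finset.univ.filter (fun p : Fin m × Fin k => M p.1 p.2 = 1)) := by
      ext p; simp
    rw [hset, Set.ncard_coe_finset, aux_ones_split,
      ← Finset.sum_subset (Finset.subset_univ rows) (fun r _ hr => hcnt0 r hr),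
      Finset.sum_congr rfl hcnt, Finset.sum_const, hcount_rows, smul_eq_mul]
    omega
  exact ⟨⟨hrank, x, hmul, hx0⟩, hones, hnrows⟩


/-- Final assembly for the forward direction. -/
lemma aux_final {m k : ℕ} {M : Matrix (Fin m) (Fin k) ℝ}
    {rows : Finset (Fin m)} (hrows : ∀ r, r ∈ rows ↔ ∃ l, M r l ≠ 0)
    {I J : Fin m → Fin k}
    (hIJ : ∀ r ∈ rows, I r ≠ J r ∧ IsEdgeRow M r (I r) (J r))
    {x : Fin k → ℝ} (hmul : M.mulVec x = 0) (hx0 : ∀ j, x j ≠ 0)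
    {G : SimpleGraph (Fin k)} (hG : G.IsTree) {r0 : Fin m} (hr0m : r0 ∈ rows)
    (hedge : G.edgeSet = ↑((rows.erase r0).image (fun r => s(I r, J r))))
    (hinj : Set.InjOn (fun r => s(I r, J r)) ↑(rows.erase r0)) :
    ∃ (G : SimpleGraph (Fin k)) (a b : Fin k) (r0 : Fin m),
      G.IsTree ∧ Odd (G.dist a b) ∧
      IsEdgeRow M r0 a b ∧
      (∀ i j, G.Adj i j → ∃! r, r ≠ r0 ∧ IsEdgeRow M r i j) ∧
      (∀ r, r ≠ r0 → (∀ l, M r l = 0) ∨ ∃ i j, G.Adj i j ∧ IsEdgeRow M r i j) := by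
  classical
  have hrow_mem : ∀ {r : Fin m} {i j : Fin k}, IsEdgeRow M r i j → r ∈ rows := by
    intro r i j hrow
    rw [hrows]
    exact ⟨i, by rw [hrow i]; simp⟩
  -- every adjacency of G comes from a row distinct from r0
  have hofadj : ∀ i j : Fin k, G.Adj i j →
      ∃ r ∈ rows.erase r0, IsEdgeRow M r i j ∧ s(I r, J r) = s(i, j) := by
    intro i j hadj
    have hmem : s(i, j) ∈ G.edgeSet := hadj
    rw [hedge] at hmem
    obtain ⟨r, hr, hPr'⟩ := Finset.mem_image.1 (Finset.mem_coe.1 hmem)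
    have hPr : s(I r, J r) = s(i, j) := hPr'
    have hrow := (hIJ r (Finset.mem_erase.1 hr).2).2
    refine ⟨r, hr, ?_, hPr⟩
    rw [Sym2.eq_iff] at hPr
    rcases hPr with ⟨h1, h2⟩ | ⟨h1, h2⟩
    · rwa [h1, h2] at hrow
    · rw [h1, h2] at hrow
      intro l; simp [hrow l, or_comm]
  have hsumadj : ∀ i j : Fin k, G.Adj i j → x i + x j = 0 := by
    intro i j hadj
    obtain ⟨r, hr, hrow, -⟩ := hofadj i j hadj
    have := congrFun hmul r
    rwa [aux_mulVec_edgeRow hadj.ne hrow, Pi.zero_apply] at this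
  have hr0IJ := hIJ r0 hr0m
  refine ⟨G, I r0, J r0, r0, hG, ?_, hr0IJ.2, ?_, ?_⟩
  · -- odd distance
    refine aux_odd_dist hG.isConnected hsumadj ?_ (hx0 (I r0))
    have := congrFun hmul r0
    rwa [aux_mulVec_edgeRow hr0IJ.1 hr0IJ.2, Pi.zero_apply] at this
  · -- unique row for each tree edge
    intro i j hadj
    obtain ⟨r, hr, hrow, hPr⟩ := hofadj i j hadj
    refine ⟨r, ⟨(Finset.mem_erase.1 hr).1, hrow⟩, ?_⟩
    rintro r' ⟨hr'ne, hrow'⟩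
    have hr'm : r' ∈ rows.erase r0 := Finset.mem_erase.2 ⟨hr'ne, hrow_mem hrow'⟩
    have hP' : s(I r', J r') = s(i, j) :=
      (aux_edgeRow_pair_eq hadj.ne hrow' (hIJ r' (Finset.mem_erase.1 hr'm).2).2).symm
    exact hinj (by exact_mod_cast hr'm) (by exact_mod_cast hr)
      (show s(I r', J r') = s(I r, J r) by rw [hP', hPr])
  · -- all other rows are zero or tree edges
    intro r hrne
    by_cases hr : r ∈ rows
    · have hrm : r ∈ rows.erase r0 := Finset.mem_erase.2 ⟨hrne, hr⟩
      have hmem : s(I r, J r) ∈ G.edgeSet := by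
        rw [hedge]
        exact_mod_cast Finset.mem_image_of_mem _ hrm
      have hadj : G.Adj (I r) (J r) := hmem
      exact Or.inr ⟨I r, J r, hadj, (hIJ r hr).2⟩
    · left
      intro l
      rw [hrows] at hr
      push_neg at hr
      exact hr l

lemma stmt18_fwd {m k : ℕ} (hk : 2 ≤ k) (M : Matrix (Fin m) (Fin k) ℝ)
    (h01 : ∀ i j, M i j = 0 ∨ M i j = 1)
    (hrank : M.rank = k - 1) (x : Fin k → ℝ) (hmul : M.mulVec x = 0) (hx0 : ∀ j, x j ≠ 0)
    (hones : Set.ncard {p : Fin m × Fin k | M p.1 p.2 = 1} = 2 * k)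
    (hnrows : Set.ncard {r : Fin m | ∃ l, M r l ≠ 0} = k) :
    ∃ (G : SimpleGraph (Fin k)) (a b : Fin k) (r0 : Fin m),
      G.IsTree ∧ Odd (G.dist a b) ∧
      IsEdgeRow M r0 a b ∧
      (∀ i j, G.Adj i j → ∃! r, r ≠ r0 ∧ IsEdgeRow M r i j) ∧
      (∀ r, r ≠ r0 → (∀ l, M r l = 0) ∨ ∃ i j, G.Adj i j ∧ IsEdgeRow M r i j) := by
  classical
  set rows : Finset (Fin m) := Finset.univ.filter (fun r => ∃ l, M r l ≠ 0) with hrowsdef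
  have hrows : ∀ r, r ∈ rows ↔ ∃ l, M r l ≠ 0 := by
    intro r; simp [hrowsdef]
  have hrows_card : #rows = k := by
    have hs : {r : Fin m | ∃ l, M r l ≠ 0} = ↑rows := by ext r; simp [hrows r]
    rwa [hs, Set.ncard_coe_finset] at hnrows
  -- nullity 1
  have hnul : finrank ℝ (LinearMap.ker M.mulVecLin) = 1 := by
    have h1 := aux_rank_nullity M
    omega
  have hxker : x ∈ LinearMap.ker M.mulVecLin := by
    rw [LinearMap.mem_ker, Matrix.mulVecLin_apply]; exact hmul
  have hxne : x ≠ 0 := fun h => hx0 ⟨0, by omega⟩ (by rw [h]; rfl)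
  -- each nonzero row has exactly two ones
  have hfil : ∀ (r : Fin m) (y : Fin k → ℝ),
      M.mulVec y r = ∑ l ∈ Finset.univ.filter (fun l => M r l = 1), y l := by
    intro r y
    rw [Finset.sum_filter]
    simp only [Matrix.mulVec, dotProduct]
    refine Finset.sum_congr rfl fun l _ => ?_
    rcases h01 r l with h | h <;> simp [h]
  have hge2 : ∀ r ∈ rows, 2 ≤ #(Finset.univ.filter (fun l => M r l = 1)) := by
    intro r hr
    obtain ⟨l, hl⟩ := (hrows r).1 hr
    have h1' : M r l = 1 := (h01 r l).resolve_left hl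
    have hpos : 0 < #(Finset.univ.filter (fun l => M r l = 1)) :=
      Finset.card_pos.2 ⟨l, by simp [h1']⟩
    have hne1 : #(Finset.univ.filter (fun l => M r l = 1)) ≠ 1 := by
      intro h1
      obtain ⟨l0, hl0⟩ := Finset.card_eq_one.1 h1
      have := congrFun hmul r
      rw [hfil r x, hl0, Finset.sum_singleton, Pi.zero_apply] at this
      exact hx0 l0 this
    omega
  have htot : ∑ r : Fin m, #(Finset.univ.filter (fun l => M r l = 1)) = 2 * k := by
    have hs : {p : Fin m × Fin k | M p.1 p.2 = 1} =
        ↑(Finset.univ.filter (fun p : Fin m × Fin k => M p.1 p.2 = 1)) := by ext p; simp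
    rw [hs, Set.ncard_coe_finset, aux_ones_split] at hones
    exact hones
  have hout : ∀ r ∉ rows, #(Finset.univ.filter (fun l => M r l = 1)) = 0 := by
    intro r hr
    rw [hrows] at hr; push_neg at hr
    rw [Finset.card_eq_zero, Finset.filter_eq_empty_iff]
    intro l _
    rw [hr l]; norm_num
  have hsumrows : ∑ r ∈ rows, #(Finset.univ.filter (fun l => M r l = 1)) = 2 * k := by
    rw [← htot]
    exact Finset.sum_subset (Finset.subset_univ rows) (fun r _ hr => hout r hr)
  have hcnt2 : ∀ r ∈ rows, #(Finset.univ.filter (fun l => M r l = 1)) = 2 := by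
    by_contra hcon
    push_neg at hcon
    obtain ⟨r', hr', hner⟩ := hcon
    have h3 : 3 ≤ #(Finset.univ.filter (fun l => M r' l = 1)) := by
      have := hge2 r' hr'; omega
    have hlt := Finset.sum_lt_sum (f := fun _ => 2)
      (g := fun r => #(Finset.univ.filter (fun l => M r l = 1)))
      (fun i hi => hge2 i hi)
      ⟨r', hr', by show (2 : ℕ) < #(Finset.univ.filter (fun l => M r' l = 1)); omega⟩
    rw [Finset.sum_const, hrows_card, smul_eq_mul, hsumrows] at hlt
    omega
  -- choose the two ones in each row
  have hpairex : ∀ r : Fin m, ∃ i j : Fin k, r ∈ rows → i ≠ j ∧ IsEdgeRow M r i j := by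
    intro r
    by_cases hr : r ∈ rows
    · obtain ⟨i, j, hij, hrow⟩ := aux_exists_edgeRow h01 (hcnt2 r hr)
      exact ⟨i, j, fun _ => ⟨hij, hrow⟩⟩
    · exact ⟨⟨0, by omega⟩, ⟨0, by omega⟩, fun h => absurd h hr⟩
  choose I J hIJ using hpairex
  obtain ⟨P, hPdef⟩ : ∃ P : Fin m → Sym2 (Fin k), P = fun r => s(I r, J r) := ⟨_, rfl⟩
  have hPr_eq : ∀ r, P r = s(I r, J r) := fun r => by rw [hPdef]
  obtain ⟨H, hHdef⟩ : ∃ H : SimpleGraph (Fin k),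
      H = SimpleGraph.fromEdgeSet ↑(rows.image P) := ⟨_, rfl⟩
  have hHadj : ∀ i j : Fin k, H.Adj i j ↔ (s(i, j) ∈ rows.image P ∧ i ≠ j) := by
    intro i j
    rw [hHdef, SimpleGraph.fromEdgeSet_adj, Finset.mem_coe]
  have hadjrow : ∀ i j : Fin k, H.Adj i j → ∃ r ∈ rows, IsEdgeRow M r i j := by
    intro i j hadj
    obtain ⟨hmem, hne⟩ := (hHadj i j).1 hadj
    obtain ⟨r, hr, hPr0⟩ := Finset.mem_image.1 hmem
    have hPr : s(I r, J r) = s(i, j) := by rw [← hPr_eq]; exact hPr0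
    have hrow := (hIJ r hr).2
    refine ⟨r, hr, ?_⟩
    rw [Sym2.eq_iff] at hPr
    rcases hPr with ⟨h1, h2⟩ | ⟨h1, h2⟩
    · rwa [h1, h2] at hrow
    · rw [h1, h2] at hrow
      intro l; simp [hrow l, or_comm]
  have hx_edge : ∀ i j : Fin k, H.Adj i j → x i + x j = 0 := by
    intro i j hadj
    obtain ⟨r, hr, hrow⟩ := hadjrow i j hadj
    have := congrFun hmul r
    rwa [aux_mulVec_edgeRow hadj.ne hrow, Pi.zero_apply] at this
  -- connectivity of the multigraph
  haveI : Nonempty (Fin k) := ⟨⟨0, by omega⟩⟩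
  have hHconn : H.Connected := by
    refine ⟨fun u v => ?_⟩
    by_contra hnr
    set y : Fin k → ℝ := fun l => if H.Reachable u l then x l else 0 with hydef
    have hyk : M.mulVec y = 0 := by
      funext r
      rw [Pi.zero_apply]
      by_cases hr : r ∈ rows
      · rw [aux_mulVec_edgeRow (hIJ r hr).1 (hIJ r hr).2]
        have hadj : H.Adj (I r) (J r) := by
          rw [hHadj]
          exact ⟨by rw [← hPr_eq r]; exact Finset.mem_image_of_mem P hr, (hIJ r hr).1⟩
        by_cases hu : H.Reachable u (I r)
        · have hu2 : H.Reachable u (J r) := hu.trans hadj.reachable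
          rw [hydef]
          simp only [if_pos hu, if_pos hu2]
          exact hx_edge _ _ hadj
        · have hu2 : ¬ H.Reachable u (J r) := fun h2 => hu (h2.trans hadj.symm.reachable)
          rw [hydef]
          simp only [if_neg hu, if_neg hu2, add_zero]
      · have hz : ∀ l, M r l = 0 := by
          rw [hrows] at hr; push_neg at hr; exact hr
        rw [aux_mulVec_zero_row hz]
    have hyker : y ∈ LinearMap.ker M.mulVecLin := by
      rw [LinearMap.mem_ker, Matrix.mulVecLin_apply]; exact hyk
    obtain ⟨t, hty⟩ := aux_smul_of_finrank_one hnul hxker hyker hxne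
    have h2 : y v = 0 := by rw [hydef]; simp [hnr]
    have h3 : y v = t * x v := by rw [hty]; simp
    have ht0 : t = 0 := by
      rcases mul_eq_zero.1 (h3 ▸ h2 : t * x v = 0)  with h | h
      · exact h
      · exact absurd h (hx0 v)
    have h4 : y u = x u := by rw [hydef]; simp [Reachable.refl]
    have h5 : y u = 0 := by rw [hty, ht0]; simp
    exact hx0 u (by rw [← h4, h5])
  -- edge finset of H
  have hHedge : H.edgeFinset = rows.image P := by
    apply Finset.coe_injective
    rw [SimpleGraph.coe_edgeFinset, hHdef, SimpleGraph.edgeSet_fromEdgeSet]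
    ext e
    simp only [Set.mem_diff, Finset.mem_coe, Set.mem_setOf_eq]
    refine ⟨fun h => h.1, fun h => ⟨h, ?_⟩⟩
    obtain ⟨r, hr, rfl⟩ := Finset.mem_image.1 h
    rw [hPr_eq r]
    simpa [Sym2.isDiag_iff_proj_eq] using (hIJ r hr).1
  have hHcard_le : #H.edgeFinset ≤ k := by
    rw [hHedge]
    exact Finset.card_image_le.trans hrows_card.le
  -- spanning tree
  obtain ⟨T, hTle, hTtree⟩ := aux_exists_spanning_tree hHconn
  have hTcard : #T.edgeFinset + 1 = k := by
    have := hTtree.card_edgeFinset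
    rwa [Fintype.card_fin] at this
  have hsub : T.edgeFinset ⊆ H.edgeFinset := SimpleGraph.edgeFinset_mono hTle
  by_cases hTH : H.edgeFinset ⊆ T.edgeFinset
  · -- H itself is the tree; there is a duplicated row
    have heq : T.edgeFinset = H.edgeFinset := Finset.Subset.antisymm hsub hTH
    have hHT : T = H := by
      apply SimpleGraph.edgeSet_inj.1
      rw [← SimpleGraph.coe_edgeFinset, ← SimpleGraph.coe_edgeFinset, heq]
    have himgcard : #(rows.image P) = k - 1 := by
      rw [← hHedge, ← heq]
      omega
    have hlt : #(rows.image P) < #rows := by omega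
    obtain ⟨r1, hr1m, r0, hr0m, hne01, hPeq⟩ :=
      Finset.exists_ne_map_eq_of_card_lt_of_maps_to hlt
        (fun r hr => Finset.mem_image_of_mem P hr)
    have himg : (rows.erase r0).image P = rows.image P := by
      apply Finset.Subset.antisymm (Finset.image_subset_image (Finset.erase_subset _ _))
      intro e he
      obtain ⟨r, hr, rfl⟩ := Finset.mem_image.1 he
      by_cases hrr : r = r0
      · subst hrr
        exact Finset.mem_image.2 ⟨r1, Finset.mem_erase.2 ⟨hne01, hr1m⟩, hPeq⟩
      · exact Finset.mem_image.2 ⟨r, Finset.mem_erase.2 ⟨hrr, hr⟩, rfl⟩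
    have hinj : Set.InjOn P ↑(rows.erase r0) := by
      apply Finset.injOn_of_card_image_eq
      rw [himg, himgcard]
      have := Finset.card_erase_add_one hr0m
      omega
    have hedge : H.edgeSet = ↑((rows.erase r0).image (fun r => s(I r, J r))) := by
      rw [← SimpleGraph.coe_edgeFinset, hHedge, ← himg, hPdef]
    have hinj' : Set.InjOn (fun r => s(I r, J r)) ↑(rows.erase r0) := by
      rw [← hPdef]; exact hinj
    exact aux_final hrows hIJ hmul hx0 (hHT ▸ hTtree) hr0m hedge hinj'
  · -- H has one extra edge beyond the spanning tree
    obtain ⟨e, heH, heT⟩ := Finset.not_subset.1 hTH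
    have hHcard : #H.edgeFinset = k := by
      have h1 : insert e T.edgeFinset ⊆ H.edgeFinset := Finset.insert_subset heH hsub
      have h2 : #(insert e T.edgeFinset) = #T.edgeFinset + 1 :=
        Finset.card_insert_of_notMem heT
      have h3 := Finset.card_le_card h1
      omega
    have himgcard : #(rows.image P) = #rows := by
      rw [← hHedge, hHcard, hrows_card]
    have hinjfull : Set.InjOn P ↑rows := Finset.injOn_of_card_image_eq himgcard
    have heimg : e ∈ rows.image P := by rw [← hHedge]; exact heH
    obtain ⟨r0, hr0m, hPr0⟩ := Finset.mem_image.1 heimg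
    have himg_erase : (rows.erase r0).image P = H.edgeFinset.erase e := by
      ext f
      simp only [Finset.mem_image, Finset.mem_erase]
      constructor
      · rintro ⟨r, ⟨hrne, hrm⟩, rfl⟩
        refine ⟨fun hfe => hrne (hinjfull hrm hr0m (by rw [hfe, hPr0])), ?_⟩
        rw [hHedge]
        exact Finset.mem_image_of_mem P hrm
      · rintro ⟨hfe, hf⟩
        rw [hHedge] at hf
        obtain ⟨r, hr, rfl⟩ := Finset.mem_image.1 hf
        exact ⟨r, ⟨fun hrr => hfe (by rw [hrr, hPr0]), hr⟩, rfl⟩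
    have hTedge : T.edgeFinset = H.edgeFinset.erase e := by
      apply Finset.eq_of_subset_of_card_le (Finset.subset_erase.2 ⟨hsub, heT⟩)
      rw [Finset.card_erase_of_mem heH]
      omega
    have hedge : T.edgeSet = ↑((rows.erase r0).image (fun r => s(I r, J r))) := by
      rw [← SimpleGraph.coe_edgeFinset, hTedge, ← himg_erase, hPdef]
    have hinj' : Set.InjOn (fun r => s(I r, J r)) ↑(rows.erase r0) := by
      rw [← hPdef]
      exact hinjfull.mono (by exact_mod_cast Finset.erase_subset _ _)
    exact aux_final hrows hIJ hmul hx0 hTtree hr0m hedge hinj'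

/-- A {0,1}-matrix with `k ≥ 2` columns is a minimal linear dependency with exactly `2k` ones
and exactly `k` nonzero rows if and only if its nonzero rows form the edge-vertex incidence
matrix of a tree on `k` vertices together with one additional edge (possibly a multi-edge)
joining two vertices at odd distance in the tree. -/
theorem stmt18 {m k : ℕ} (hk : 2 ≤ k) (M : Matrix (Fin m) (Fin k) ℝ)
    (h01 : ∀ i j, M i j = 0 ∨ M i j = 1) :
    ((M.rank = k - 1 ∧ ∃ x : Fin k → ℝ, M.mulVec x = 0 ∧ ∀ j, x j ≠ 0) ∧
      Set.ncard {p : Fin m × Fin k | M p.1 p.2 = 1} = 2 * k ∧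
      Set.ncard {r : Fin m | ∃ l, M r l ≠ 0} = k)
    ↔ ∃ (G : SimpleGraph (Fin k)) (a b : Fin k) (r0 : Fin m),
        G.IsTree ∧ Odd (G.dist a b) ∧
        IsEdgeRow M r0 a b ∧
        (∀ i j, G.Adj i j → ∃! r, r ≠ r0 ∧ IsEdgeRow M r i j) ∧
        (∀ r, r ≠ r0 → (∀ l, M r l = 0) ∨ ∃ i j, G.Adj i j ∧ IsEdgeRow M r i j) := by
  constructor
  · rintro ⟨⟨hrank, x, hmul, hx0⟩, hones, hnrows⟩
    exact stmt18_fwd hk M h01 hrank x hmul hx0 hones hnrows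
  · rintro ⟨G, a, b, r0, hT, hodd, hr0, huniq, hrest⟩
    exact stmt18_bwd hk M h01 G a b r0 hT hodd hr0 huniq hrest
end
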